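/- arXiv:1210.7996 — 5 statements merged into one kernel-verified Lean document; each statement's English description precedes it below -/
import Mathlib

section
/- (Proposition 1, implication 1)⇒2)) Suppose that T(n) := (∑_{k∈ℤ^d, 1≤|k|₁≤n} |k|₁^p |f̂(k)|^p)^{1/p} satisfies T(n) = O(n·ω(1/n)) as n→∞, i.e., there exist C>0 and N∈ℕ such that T(n) ≤ C·n·ω(1/n) for all n ≥ N. Then E_σ(n) := (∑_{1≤|k|₁≤n} (|k|₁/(n+1))^p |f̂(k)|^p + ∑_{|k|₁>n} |f̂(k)|^p)^{1/p} satisfies E_σ(n) = O(ω(1/n)) as n→∞. -/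
open scoped Real ENNReal
open MeasureTheory

def norm1 {d : ℕ} (k : Fin d → ℤ) : ℕ := ∑ j, (k j).natAbs

def diagSum {d : ℕ} (k : Fin d → ℤ) : ℤ := ∑ j, k j

noncomputable def fCoeff {d : ℕ} (f : (Fin d → ℝ) → ℂ) (k : Fin d → ℤ) : ℂ :=
  ∫ x in Set.Icc (0 : Fin d → ℝ) (fun _ => 2 * Real.pi),
    f x * Complex.exp (-Complex.I * (∑ j, (k j : ℂ) * (x j : ℂ)))

/-! ### Auxiliary definitions and lemmas -/

noncomputable def gg {d : ℕ} (f : (Fin d → ℝ) → ℂ) (p : ℝ) (k : Fin d → ℤ) : ℝ≥0∞ :=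
  ENNReal.ofReal (((norm1 k : ℝ) * ‖fCoeff f k‖) ^ p)

noncomputable def SS {d : ℕ} (f : (Fin d → ℝ) → ℂ) (p : ℝ) (m : ℕ) : ℝ≥0∞ :=
  ∑' k : Fin d → ℤ, if 1 ≤ norm1 k ∧ norm1 k ≤ m then gg f p k else 0

noncomputable def QQ {d : ℕ} (f : (Fin d → ℝ) → ℂ) (p : ℝ) (n m : ℕ) : ℝ≥0∞ :=
  ∑' k : Fin d → ℤ, if n < norm1 k ∧ norm1 k ≤ m then gg f p k else 0

lemma step_ineq {p : ℝ} (hp : 1 ≤ p) {x : ℝ} (hx : 1 ≤ x) :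
    x ^ (-p) - (x+1) ^ (-p) ≤ p * x ^ (-(p+1)) := by
  have hx0 : 0 < x := lt_of_lt_of_le one_pos hx
  have hx1 : 0 < x + 1 := by linarith
  have hb : 1 + p * (-(1/(x+1))) ≤ (1 + (-(1/(x+1)))) ^ p := by
    apply one_add_mul_self_le_rpow_one_add _ hp
    rw [neg_le, neg_neg]
    rw [div_le_one hx1]; linarith
  have h1 : (1 : ℝ) - 1/(x+1) = x/(x+1) := by field_simp; ring
  have hkey : 1 - p / (x+1) ≤ (x/(x+1)) ^ p := by
    rw [← h1]
    calc 1 - p/(x+1) = 1 + p * (-(1/(x+1))) := by ring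
    _ ≤ _ := hb
  have hxp : (0:ℝ) < x ^ (-p) := Real.rpow_pos_of_pos hx0 _
  have hsplit : (x+1) ^ (-p) = x ^ (-p) * (x/(x+1)) ^ p := by
    rw [Real.div_rpow hx0.le hx1.le, Real.rpow_neg hx0.le, Real.rpow_neg hx1.le]
    field_simp
  rw [hsplit]
  have h2 : x ^ (-p) - x ^ (-p) * (x / (x + 1)) ^ p = x ^ (-p) * (1 - (x/(x+1))^p) := by ring
  rw [h2]
  have h3 : x ^ (-p) * (1 - (x/(x+1))^p) ≤ x ^ (-p) * (p/(x+1)) := by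
    apply mul_le_mul_of_nonneg_left _ hxp.le
    linarith
  refine h3.trans ?_
  have h4 : x ^ (-(p+1)) = x ^ (-p) / x := by
    rw [← Real.rpow_sub_one hx0.ne']
    ring_nf
  rw [h4]
  have h5 : p * (x ^ (-p) / x) = x ^ (-p) * (p / x) := by ring
  rw [h5]
  gcongr <;> linarith

lemma rpow_neg_anti {p x y : ℝ} (hp : 0 ≤ p) (hx : 0 < x) (hxy : x ≤ y) :
    y ^ (-p) ≤ x ^ (-p) := by
  rw [Real.rpow_neg hx.le, Real.rpow_neg (hx.trans_le hxy).le]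
  exact inv_anti₀ (Real.rpow_pos_of_pos hx p) (Real.rpow_le_rpow hx.le hxy hp)

lemma tele_hasSum {p : ℝ} (hp : 0 < p) (v : ℕ) (hv : 1 ≤ v) :
    HasSum (fun j : ℕ => ((v:ℝ)+j) ^ (-p) - ((v:ℝ)+j+1) ^ (-p)) ((v:ℝ) ^ (-p)) := by
  have hv0 : (0:ℝ) < v := by exact_mod_cast hv
  have hnn : ∀ j : ℕ, 0 ≤ ((v:ℝ)+j) ^ (-p) - ((v:ℝ)+j+1) ^ (-p) := by
    intro j
    have h1 : (0:ℝ) < (v:ℝ)+j := by positivity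
    have := rpow_neg_anti hp.le h1 (by linarith : (v:ℝ)+j ≤ (v:ℝ)+j+1)
    linarith
  rw [hasSum_iff_tendsto_nat_of_nonneg hnn]
  have hsum : ∀ n : ℕ, ∑ j ∈ Finset.range n, (((v:ℝ)+j) ^ (-p) - ((v:ℝ)+j+1) ^ (-p))
      = (v:ℝ) ^ (-p) - ((v:ℝ)+n) ^ (-p) := by
    intro n
    induction n with
    | zero => simp
    | succ m ih =>
      rw [Finset.sum_range_succ, ih]
      push_cast
      ring_nf
  simp only [hsum]
  have h2 : Filter.Tendsto (fun n : ℕ => ((v:ℝ)+n) ^ (-p)) Filter.atTop (nhds 0) := by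
    apply (tendsto_rpow_neg_atTop hp).comp
    apply Filter.tendsto_atTop_add_const_left
    exact tendsto_natCast_atTop_atTop
  have h3 := Filter.Tendsto.const_sub ((v:ℝ) ^ (-p)) h2
  simpa using h3

lemma L1 {p : ℝ} (hp : 1 ≤ p) (v : ℕ) (hv : 1 ≤ v) :
    ENNReal.ofReal ((v:ℝ) ^ (-p)) ≤
      ENNReal.ofReal p * ∑' m : ℕ, (if v ≤ m then ENNReal.ofReal ((m:ℝ) ^ (-(p+1))) else 0) := by
  have hp0 : 0 < p := lt_of_lt_of_le one_pos hp
  have hshift : (∑' m : ℕ, (if v ≤ m then ENNReal.ofReal ((m:ℝ) ^ (-(p+1))) else 0))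
      = ∑' j : ℕ, ENNReal.ofReal (((v:ℝ)+j) ^ (-(p+1))) := by
    rw [← Summable.sum_add_tsum_nat_add' (k := v)
      (f := fun m => if v ≤ m then ENNReal.ofReal ((m:ℝ) ^ (-(p+1))) else 0) ENNReal.summable]
    have h0 : ∑ m ∈ Finset.range v, (if v ≤ m then ENNReal.ofReal ((m:ℝ) ^ (-(p+1))) else 0) = 0 := by
      apply Finset.sum_eq_zero
      intro m hm
      rw [if_neg]
      exact Nat.not_le.mpr (Finset.mem_range.mp hm)
    rw [h0, zero_add]
    apply tsum_congr
    intro j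
    simp only [if_pos (Nat.le_add_left v j)]
    congr 2
    push_cast
    ring
  rw [hshift]
  have htel := (tele_hasSum hp0 v hv)
  have hnn : ∀ j : ℕ, 0 ≤ ((v:ℝ)+j) ^ (-p) - ((v:ℝ)+j+1) ^ (-p) := by
    intro j
    have h1 : (0:ℝ) < (v:ℝ)+j := by positivity
    have := rpow_neg_anti hp0.le h1 (by linarith : (v:ℝ)+j ≤ (v:ℝ)+j+1)
    linarith
  have hLHS : ENNReal.ofReal ((v:ℝ) ^ (-p))
      = ∑' j : ℕ, ENNReal.ofReal (((v:ℝ)+j) ^ (-p) - ((v:ℝ)+j+1) ^ (-p)) := by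
    rw [← htel.tsum_eq]
    exact ENNReal.ofReal_tsum_of_nonneg hnn htel.summable
  rw [hLHS, ← ENNReal.tsum_mul_left]
  apply ENNReal.tsum_le_tsum
  intro j
  rw [← ENNReal.ofReal_mul hp0.le]
  apply ENNReal.ofReal_le_ofReal
  have hx1 : (1:ℝ) ≤ (v:ℝ)+j := by
    have h5 : (1:ℝ) ≤ (v:ℝ) := by exact_mod_cast hv
    have h6 : (0:ℝ) ≤ (j:ℝ) := Nat.cast_nonneg j
    linarith
  exact step_ineq hp hx1

lemma QQ_le_SS {d : ℕ} (f : (Fin d → ℝ) → ℂ) (p : ℝ) (n m : ℕ) :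
    QQ f p n m ≤ SS f p m := by
  apply ENNReal.tsum_le_tsum
  intro k
  by_cases h : n < norm1 k ∧ norm1 k ≤ m
  · rw [if_pos h, if_pos ⟨Nat.one_le_iff_ne_zero.mpr (by omega), h.2⟩]
  · rw [if_neg h]; exact zero_le

lemma QQ_eq_zero {d : ℕ} (f : (Fin d → ℝ) → ℂ) (p : ℝ) {n m : ℕ} (h : m ≤ n) :
    QQ f p n m = 0 := by
  unfold QQ
  convert tsum_zero with k
  rw [if_neg]
  rintro ⟨h1, h2⟩
  omega

lemma tail_le {d : ℕ} {p : ℝ} (hp : 1 ≤ p) (f : (Fin d → ℝ) → ℂ) (n : ℕ) :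
    (∑' k : Fin d → ℤ, if n < norm1 k then
        ENNReal.ofReal ((‖fCoeff f k‖) ^ p) else 0)
      ≤ ENNReal.ofReal p * ∑' m : ℕ, ENNReal.ofReal ((m:ℝ) ^ (-(p+1))) * QQ f p n m := by
  have hp0 : 0 < p := lt_of_lt_of_le one_pos hp
  have key : ∀ k : Fin d → ℤ,
      (if n < norm1 k then ENNReal.ofReal ((‖fCoeff f k‖) ^ p) else 0)
      ≤ ENNReal.ofReal p * ∑' m : ℕ,
          (if n < norm1 k ∧ norm1 k ≤ m then ENNReal.ofReal ((m:ℝ) ^ (-(p+1))) * gg f p k else 0) := by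
    intro k
    by_cases hk : n < norm1 k
    · rw [if_pos hk]
      have hv1 : 1 ≤ norm1 k := by omega
      have hvR : (0:ℝ) < (norm1 k : ℝ) := by exact_mod_cast hv1
      have habs : (‖fCoeff f k‖) ^ p
          = ((norm1 k : ℝ)) ^ (-p) * (((norm1 k : ℝ)) * ‖fCoeff f k‖) ^ p := by
        rw [Real.mul_rpow (Nat.cast_nonneg _) (norm_nonneg _),
          Real.rpow_neg (Nat.cast_nonneg _), ← mul_assoc,
          inv_mul_cancel₀ (ne_of_gt (Real.rpow_pos_of_pos hvR p)), one_mul]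
      rw [habs, ENNReal.ofReal_mul (by positivity : (0:ℝ) ≤ ((norm1 k : ℝ)) ^ (-p))]
      have hL1 := L1 hp (norm1 k) hv1
      calc ENNReal.ofReal ((norm1 k : ℝ) ^ (-p))
            * ENNReal.ofReal (((norm1 k : ℝ) * ‖fCoeff f k‖) ^ p)
          ≤ (ENNReal.ofReal p * ∑' m : ℕ, (if norm1 k ≤ m then ENNReal.ofReal ((m:ℝ) ^ (-(p+1))) else 0))
            * ENNReal.ofReal (((norm1 k : ℝ) * ‖fCoeff f k‖) ^ p) :=
          mul_le_mul_left hL1 _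
        _ = ENNReal.ofReal p * ∑' m : ℕ,
              (if norm1 k ≤ m then ENNReal.ofReal ((m:ℝ) ^ (-(p+1))) else 0) * gg f p k := by
          rw [mul_assoc, ENNReal.tsum_mul_right]; rfl
        _ = ENNReal.ofReal p * ∑' m : ℕ,
              (if n < norm1 k ∧ norm1 k ≤ m then ENNReal.ofReal ((m:ℝ) ^ (-(p+1))) * gg f p k else 0) := by
          congr 1
          apply tsum_congr
          intro m
          by_cases hm : norm1 k ≤ m
          · rw [if_pos hm, if_pos ⟨hk, hm⟩]
          · rw [if_neg hm, if_neg (fun h => hm h.2), zero_mul]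
    · rw [if_neg hk]; exact zero_le
  calc (∑' k : Fin d → ℤ, if n < norm1 k then
        ENNReal.ofReal ((‖fCoeff f k‖) ^ p) else 0)
      ≤ ∑' k : Fin d → ℤ, ENNReal.ofReal p * ∑' m : ℕ,
          (if n < norm1 k ∧ norm1 k ≤ m then ENNReal.ofReal ((m:ℝ) ^ (-(p+1))) * gg f p k else 0) :=
        ENNReal.tsum_le_tsum key
    _ = ENNReal.ofReal p * ∑' k : Fin d → ℤ, ∑' m : ℕ,
          (if n < norm1 k ∧ norm1 k ≤ m then ENNReal.ofReal ((m:ℝ) ^ (-(p+1))) * gg f p k else 0) :=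
        ENNReal.tsum_mul_left
    _ = ENNReal.ofReal p * ∑' m : ℕ, ∑' k : Fin d → ℤ,
          (if n < norm1 k ∧ norm1 k ≤ m then ENNReal.ofReal ((m:ℝ) ^ (-(p+1))) * gg f p k else 0) := by
        rw [ENNReal.tsum_comm]
    _ = ENNReal.ofReal p * ∑' m : ℕ, ENNReal.ofReal ((m:ℝ) ^ (-(p+1))) * QQ f p n m := by
        congr 1
        apply tsum_congr
        intro m
        unfold QQ
        rw [← ENNReal.tsum_mul_left]
        apply tsum_congr
        intro k
        by_cases h : n < norm1 k ∧ norm1 k ≤ m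
        · rw [if_pos h, if_pos h]
        · rw [if_neg h, if_neg h, mul_zero]

theorem stmt_0
    {d : ℕ} (hd : 1 ≤ d) {p : ℝ} (hp : 1 ≤ p)
    (f : (Fin d → ℝ) → ℂ)
    (hper : ∀ (x : Fin d → ℝ) (j : Fin d), f (Function.update x j (x j + 2 * Real.pi)) = f x)
    (hint : IntegrableOn f (Set.Icc (0 : Fin d → ℝ) (fun _ => 2 * Real.pi)))
    (ω : ℝ → ℝ)
    (hωc : ContinuousOn ω (Set.Icc 0 1)) (hωm : MonotoneOn ω (Set.Icc 0 1))
    (hω0 : ω 0 = 0) (hωpos : ∀ t ∈ Set.Ioc (0:ℝ) 1, 0 < ω t)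
    (hB : ∃ C₀ > (0:ℝ), ∃ N₀ : ℕ, 1 ≤ N₀ ∧ ∀ n : ℕ, N₀ ≤ n →
      (∑' v : ℕ, ENNReal.ofReal (ω (1 / ((n : ℝ) + 1 + (v : ℝ))) / ((n : ℝ) + 1 + (v : ℝ))))
        ≤ ENNReal.ofReal (C₀ * ω (1 / (n : ℝ))))
    (hT :
      ∃ C > (0:ℝ), ∃ N : ℕ, ∀ n : ℕ, N ≤ n →
      (∑' k : Fin d → ℤ, if 1 ≤ norm1 k ∧ norm1 k ≤ n then
          ENNReal.ofReal (((norm1 k : ℝ) * ‖fCoeff f k‖) ^ p) else 0) ^ (1/p)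
        ≤ ENNReal.ofReal (C * (n : ℝ) * ω (1 / (n : ℝ))))
    :
    ∃ C > (0:ℝ), ∃ N : ℕ, ∀ n : ℕ, N ≤ n →
      ((∑' k : Fin d → ℤ, if 1 ≤ norm1 k ∧ norm1 k ≤ n then
          ENNReal.ofReal ((((norm1 k : ℝ) / ((n : ℝ) + 1)) * ‖fCoeff f k‖) ^ p) else 0)
        + ∑' k : Fin d → ℤ, if n < norm1 k then
          ENNReal.ofReal ((‖fCoeff f k‖) ^ p) else 0) ^ (1/p)
        ≤ ENNReal.ofReal (C * ω (1 / (n : ℝ))) := by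
  obtain ⟨C₀, hC₀, N₀, hN₀1, hB⟩ := hB
  obtain ⟨C, hC, N, hT⟩ := hT
  have hp0 : (0:ℝ) < p := lt_of_lt_of_le one_pos hp
  refine ⟨C * (1 + p*C₀) ^ (1/p), by positivity, max (max N N₀) 1, ?_⟩
  intro n hn
  have hn1 : 1 ≤ n := le_trans (le_max_right _ _) hn
  have hnN : N ≤ n := le_trans (le_trans (le_max_left _ _) (le_max_left _ _)) hn
  have hnN₀ : N₀ ≤ n := le_trans (le_trans (le_max_right _ _) (le_max_left _ _)) hn
  have hn0R : (0:ℝ) < n := by exact_mod_cast hn1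
  have hmem : ∀ m : ℕ, 1 ≤ m → 1/(m:ℝ) ∈ Set.Icc (0:ℝ) 1 := by
    intro m hm
    have hm0 : (0:ℝ) < m := by exact_mod_cast hm
    have hm1 : (1:ℝ) ≤ m := by exact_mod_cast hm
    constructor
    · positivity
    · rw [div_le_one hm0]; exact hm1
  have hωpos' : ∀ m : ℕ, 1 ≤ m → 0 < ω (1/(m:ℝ)) := by
    intro m hm
    have hm0 : (0:ℝ) < m := by exact_mod_cast hm
    exact hωpos _ ⟨by positivity, (hmem m hm).2⟩
  have hωn := hωpos' n hn1
  -- bound on SS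
  have hSb : ∀ m : ℕ, N ≤ m → 1 ≤ m →
      SS f p m ≤ ENNReal.ofReal ((C * m * ω (1/(m:ℝ))) ^ p) := by
    intro m hm hm1
    have h1 := hT m hm
    have h2 : SS f p m = ((SS f p m) ^ (1/p)) ^ p := by
      rw [← ENNReal.rpow_mul, one_div, inv_mul_cancel₀ hp0.ne', ENNReal.rpow_one]
    rw [h2]
    calc ((SS f p m) ^ (1/p)) ^ p
        ≤ (ENNReal.ofReal (C * m * ω (1/(m:ℝ)))) ^ p := by
          apply ENNReal.rpow_le_rpow _ hp0.le
          exact h1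
      _ = ENNReal.ofReal ((C * m * ω (1/(m:ℝ))) ^ p) := by
          apply ENNReal.ofReal_rpow_of_nonneg _ hp0.le
          have := (hωpos' m hm1).le
          positivity
  -- First term
  have hFT : (∑' k : Fin d → ℤ, if 1 ≤ norm1 k ∧ norm1 k ≤ n then
          ENNReal.ofReal ((((norm1 k : ℝ) / ((n : ℝ) + 1)) * ‖fCoeff f k‖) ^ p) else 0)
      = ENNReal.ofReal (((n:ℝ)+1) ^ (-p)) * SS f p n := by
    unfold SS
    rw [← ENNReal.tsum_mul_left]
    apply tsum_congr
    intro k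
    by_cases h : 1 ≤ norm1 k ∧ norm1 k ≤ n
    · rw [if_pos h, if_pos h]
      unfold gg
      rw [← ENNReal.ofReal_mul (by positivity)]
      congr 1
      have e1 : (norm1 k : ℝ) / ((n:ℝ)+1) * ‖fCoeff f k‖
          = ((n:ℝ)+1)⁻¹ * ((norm1 k : ℝ) * ‖fCoeff f k‖) := by ring
      rw [e1, Real.mul_rpow (by positivity) (by positivity), Real.rpow_neg (by positivity),
        ← Real.inv_rpow (by positivity)]
    · rw [if_neg h, if_neg h, mul_zero]
  have hFTle : (∑' k : Fin d → ℤ, if 1 ≤ norm1 k ∧ norm1 k ≤ n then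
          ENNReal.ofReal ((((norm1 k : ℝ) / ((n : ℝ) + 1)) * ‖fCoeff f k‖) ^ p) else 0)
      ≤ ENNReal.ofReal ((C * ω (1/(n:ℝ))) ^ p) := by
    rw [hFT]
    calc ENNReal.ofReal (((n:ℝ)+1) ^ (-p)) * SS f p n
        ≤ ENNReal.ofReal (((n:ℝ)+1) ^ (-p)) * ENNReal.ofReal ((C * n * ω (1/(n:ℝ))) ^ p) :=
          mul_le_mul_right (hSb n hnN hn1) _
      _ = ENNReal.ofReal (((n:ℝ)+1) ^ (-p) * (C * n * ω (1/(n:ℝ))) ^ p) := by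
          rw [← ENNReal.ofReal_mul (by positivity)]
      _ ≤ ENNReal.ofReal ((C * ω (1/(n:ℝ))) ^ p) := by
          apply ENNReal.ofReal_le_ofReal
          rw [Real.rpow_neg (by positivity), ← Real.inv_rpow (by positivity),
            ← Real.mul_rpow (by positivity) (by positivity)]
          apply Real.rpow_le_rpow (by positivity) _ hp0.le
          rw [inv_mul_le_iff₀ (by positivity)]
          nlinarith [mul_nonneg hC.le hωn.le]
  -- Tail term
  have hQb : ∀ m : ℕ, ENNReal.ofReal ((m:ℝ) ^ (-(p+1))) * QQ f p n m
      ≤ if n < m then ENNReal.ofReal ((C ^ p * ω (1/(n:ℝ)) ^ (p-1)) * (ω (1/(m:ℝ)) / m)) else 0 := by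
    intro m
    by_cases hm : n < m
    · rw [if_pos hm]
      have hm1 : 1 ≤ m := by omega
      have hm0 : (0:ℝ) < m := by exact_mod_cast hm1
      have hωmpos := hωpos' m hm1
      calc ENNReal.ofReal ((m:ℝ) ^ (-(p+1))) * QQ f p n m
          ≤ ENNReal.ofReal ((m:ℝ) ^ (-(p+1))) * ENNReal.ofReal ((C * m * ω (1/(m:ℝ))) ^ p) :=
            mul_le_mul_right ((QQ_le_SS f p n m).trans (hSb m (by omega) hm1)) _
        _ = ENNReal.ofReal ((m:ℝ) ^ (-(p+1)) * (C * m * ω (1/(m:ℝ))) ^ p) := by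
            rw [← ENNReal.ofReal_mul (by positivity)]
        _ ≤ ENNReal.ofReal ((C ^ p * ω (1/(n:ℝ)) ^ (p-1)) * (ω (1/(m:ℝ)) / m)) := by
            apply ENNReal.ofReal_le_ofReal
            have h1 : (C * (m:ℝ) * ω (1/(m:ℝ))) ^ p = C^p * (m:ℝ)^p * ω (1/(m:ℝ))^p := by
              rw [Real.mul_rpow (by positivity) hωmpos.le, Real.mul_rpow hC.le (by positivity)]
            have e2 : ω (1/(m:ℝ))^(p-1) * ω (1/(m:ℝ)) = ω (1/(m:ℝ))^p := by
              rw [Real.rpow_sub_one hωmpos.ne', div_mul_cancel₀ _ hωmpos.ne']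
            have e3 : (m:ℝ)^(-(p+1)) * (m:ℝ)^p = (m:ℝ)⁻¹ := by
              rw [← Real.rpow_add hm0]
              have : -(p+1)+p = -1 := by ring
              rw [this, Real.rpow_neg_one]
            have hcmp : ω (1/(m:ℝ))^(p-1) ≤ ω (1/(n:ℝ))^(p-1) := by
              apply Real.rpow_le_rpow hωmpos.le _ (by linarith)
              apply hωm (hmem m hm1) (hmem n hn1)
              apply one_div_le_one_div_of_le hn0R
              exact_mod_cast Nat.le_of_lt hm
            calc (m:ℝ)^(-(p+1)) * (C * (m:ℝ) * ω (1/(m:ℝ))) ^ p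
                = ((m:ℝ)^(-(p+1)) * (m:ℝ)^p) * (C^p * (ω (1/(m:ℝ))^(p-1) * ω (1/(m:ℝ)))) := by
                  rw [h1, e2]; ring
              _ = (m:ℝ)⁻¹ * (C^p * (ω (1/(m:ℝ))^(p-1) * ω (1/(m:ℝ)))) := by rw [e3]
              _ ≤ (m:ℝ)⁻¹ * (C^p * (ω (1/(n:ℝ))^(p-1) * ω (1/(m:ℝ)))) := by
                  apply mul_le_mul_of_nonneg_left _ (by positivity)
                  apply mul_le_mul_of_nonneg_left _ (by positivity)
                  exact mul_le_mul_of_nonneg_right hcmp hωmpos.le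
              _ = (C ^ p * ω (1/(n:ℝ)) ^ (p-1)) * (ω (1/(m:ℝ)) / m) := by
                  field_simp
    · rw [if_neg hm, QQ_eq_zero f p (by omega), mul_zero]
  have hshift2 : (∑' m : ℕ, if n < m then
        ENNReal.ofReal ((C ^ p * ω (1/(n:ℝ)) ^ (p-1)) * (ω (1/(m:ℝ)) / m)) else 0)
      = ∑' v : ℕ, ENNReal.ofReal ((C ^ p * ω (1/(n:ℝ)) ^ (p-1))
          * (ω (1 / ((n : ℝ) + 1 + (v : ℝ))) / ((n : ℝ) + 1 + (v : ℝ)))) := by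
    rw [← Summable.sum_add_tsum_nat_add' (k := n+1)
      (f := fun m => if n < m then
        ENNReal.ofReal ((C ^ p * ω (1/(n:ℝ)) ^ (p-1)) * (ω (1/(m:ℝ)) / m)) else 0) ENNReal.summable]
    have h0 : ∑ m ∈ Finset.range (n+1), (if n < m then
        ENNReal.ofReal ((C ^ p * ω (1/(n:ℝ)) ^ (p-1)) * (ω (1/(m:ℝ)) / m)) else 0) = 0 := by
      apply Finset.sum_eq_zero
      intro m hm
      rw [if_neg]
      have := Finset.mem_range.mp hm
      omega
    rw [h0, zero_add]
    apply tsum_congr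
    intro v
    rw [if_pos (by omega : n < v + (n+1))]
    congr 3 <;> push_cast <;> ring
  have hTTle : (∑' k : Fin d → ℤ, if n < norm1 k then
          ENNReal.ofReal ((‖fCoeff f k‖) ^ p) else 0)
      ≤ ENNReal.ofReal (p * C₀ * C ^ p * ω (1/(n:ℝ)) ^ p) := by
    calc (∑' k : Fin d → ℤ, if n < norm1 k then
          ENNReal.ofReal ((‖fCoeff f k‖) ^ p) else 0)
        ≤ ENNReal.ofReal p * ∑' m : ℕ, ENNReal.ofReal ((m:ℝ) ^ (-(p+1))) * QQ f p n m :=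
          tail_le hp f n
      _ ≤ ENNReal.ofReal p * ∑' m : ℕ, (if n < m then
            ENNReal.ofReal ((C ^ p * ω (1/(n:ℝ)) ^ (p-1)) * (ω (1/(m:ℝ)) / m)) else 0) :=
          mul_le_mul_right (ENNReal.tsum_le_tsum hQb) _
      _ = ENNReal.ofReal p * ∑' v : ℕ, ENNReal.ofReal ((C ^ p * ω (1/(n:ℝ)) ^ (p-1))
            * (ω (1 / ((n : ℝ) + 1 + (v : ℝ))) / ((n : ℝ) + 1 + (v : ℝ)))) := by rw [hshift2]
      _ = ENNReal.ofReal p * (ENNReal.ofReal (C ^ p * ω (1/(n:ℝ)) ^ (p-1))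
            * ∑' v : ℕ, ENNReal.ofReal (ω (1 / ((n : ℝ) + 1 + (v : ℝ))) / ((n : ℝ) + 1 + (v : ℝ)))) := by
          congr 1
          rw [← ENNReal.tsum_mul_left]
          apply tsum_congr
          intro v
          rw [← ENNReal.ofReal_mul (by positivity)]
      _ ≤ ENNReal.ofReal p * (ENNReal.ofReal (C ^ p * ω (1/(n:ℝ)) ^ (p-1))
            * ENNReal.ofReal (C₀ * ω (1 / (n:ℝ)))) := by
          apply mul_le_mul_right
          exact mul_le_mul_right (hB n hnN₀) _
      _ = ENNReal.ofReal (p * C₀ * C ^ p * ω (1/(n:ℝ)) ^ p) := by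
          rw [← ENNReal.ofReal_mul (by positivity), ← ENNReal.ofReal_mul hp0.le]
          congr 1
          have e2 : ω (1/(n:ℝ))^(p-1) * ω (1/(n:ℝ)) = ω (1/(n:ℝ))^p := by
            rw [Real.rpow_sub_one hωn.ne', div_mul_cancel₀ _ hωn.ne']
          calc p * (C ^ p * ω (1/(n:ℝ)) ^ (p-1) * (C₀ * ω (1 / (n:ℝ))))
              = p * C₀ * C^p * (ω (1/(n:ℝ))^(p-1) * ω (1/(n:ℝ))) := by ring
            _ = p * C₀ * C ^ p * ω (1/(n:ℝ)) ^ p := by rw [e2]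
  -- combine
  have hsum : ((∑' k : Fin d → ℤ, if 1 ≤ norm1 k ∧ norm1 k ≤ n then
          ENNReal.ofReal ((((norm1 k : ℝ) / ((n : ℝ) + 1)) * ‖fCoeff f k‖) ^ p) else 0)
        + ∑' k : Fin d → ℤ, if n < norm1 k then
          ENNReal.ofReal ((‖fCoeff f k‖) ^ p) else 0)
      ≤ ENNReal.ofReal ((C * (1 + p*C₀) ^ (1/p) * ω (1/(n:ℝ))) ^ p) := by
    calc _ ≤ ENNReal.ofReal ((C * ω (1/(n:ℝ))) ^ p)
          + ENNReal.ofReal (p * C₀ * C ^ p * ω (1/(n:ℝ)) ^ p) := add_le_add hFTle hTTle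
      _ = ENNReal.ofReal ((C * ω (1/(n:ℝ))) ^ p + p * C₀ * C ^ p * ω (1/(n:ℝ)) ^ p) := by
          rw [← ENNReal.ofReal_add (by positivity) (by positivity)]
      _ = ENNReal.ofReal ((C * (1 + p*C₀) ^ (1/p) * ω (1/(n:ℝ))) ^ p) := by
          congr 1
          have h1 : (C * (1 + p*C₀) ^ (1/p) * ω (1/(n:ℝ))) ^ p
              = C ^ p * ((1 + p*C₀) ^ (1/p)) ^ p * ω (1/(n:ℝ)) ^ p := by
            rw [Real.mul_rpow (by positivity) hωn.le, Real.mul_rpow hC.le (by positivity)]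
          have h2 : ((1 + p*C₀ : ℝ) ^ (1/p)) ^ p = 1 + p*C₀ := by
            rw [← Real.rpow_mul (by positivity), one_div, inv_mul_cancel₀ hp0.ne', Real.rpow_one]
          rw [h1, h2, Real.mul_rpow hC.le hωn.le]
          ring
  calc _ ≤ (ENNReal.ofReal ((C * (1 + p*C₀) ^ (1/p) * ω (1/(n:ℝ))) ^ p)) ^ (1/p) :=
        ENNReal.rpow_le_rpow hsum (by positivity)
    _ = ENNReal.ofReal (C * (1 + p*C₀) ^ (1/p) * ω (1/(n:ℝ))) := by
        rw [← ENNReal.ofReal_rpow_of_nonneg (by positivity) hp0.le,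
          ← ENNReal.rpow_mul, mul_one_div, div_self hp0.ne', ENNReal.rpow_one]
end

section
/- (Proposition 1, implication 2)⇒3)) Suppose that E_σ(n) := (∑_{k∈ℤ^d, 1≤|k|₁≤n} (|k|₁/(n+1))^p |f̂(k)|^p + ∑_{|k|₁>n} |f̂(k)|^p)^{1/p} satisfies E_σ(n) = O(ω(1/n)) as n→∞. Then f belongs to S^p H_ω; explicitly, D(h) := (∑_{k∈ℤ^d} |f̂(k)|^p · |1 − e^{i h σ(k)}|^p)^{1/p}, where σ(k) = k_1 + ⋯ + k_d, satisfies D(h) = O(ω(|h|)) as h → 0 (h real): there exist C > 0 and δ > 0 such that D(h) ≤ C·ω(|h|) for all real h with 0 < |h| < δ. -/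
open scoped Real ENNReal
open MeasureTheory

lemma B_le_two (θ : ℝ) : ‖1 - Complex.exp (Complex.I * θ)‖ ≤ 2 := by
  calc ‖1 - Complex.exp (Complex.I * θ)‖
      ≤ ‖(1:ℂ)‖ + ‖Complex.exp (Complex.I * θ)‖ := norm_sub_le _ _
    _ ≤ 2 := by rw [mul_comm, Complex.norm_exp_ofReal_mul_I]; norm_num

lemma B_le_lin (θ : ℝ) : ‖1 - Complex.exp (Complex.I * θ)‖ ≤ 2 * |θ| := by
  rcases le_or_gt (|θ|) 1 with h | h
  · have h1 : ‖Complex.I * θ‖ ≤ 1 := by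
      simpa [norm_mul, Complex.norm_I, Complex.norm_real, Real.norm_eq_abs] using h
    have h2 := Complex.norm_exp_sub_one_le h1
    rw [norm_mul, Complex.norm_I, Complex.norm_real, Real.norm_eq_abs, one_mul] at h2
    calc ‖1 - Complex.exp (Complex.I * θ)‖
        = ‖Complex.exp (Complex.I * θ) - 1‖ := by rw [norm_sub_rev]
      _ ≤ 2 * |θ| := h2
  · exact (B_le_two θ).trans (by nlinarith [abs_nonneg θ])

lemma abs_diagSum_le {d : ℕ} (k : Fin d → ℤ) : |((diagSum k : ℤ) : ℝ)| ≤ (norm1 k : ℝ) := by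
  have h2 : (norm1 k : ℝ) = ∑ j, |((k j : ℤ) : ℝ)| := by
    simp [norm1, Nat.cast_natAbs]
  have h3 : ((diagSum k : ℤ) : ℝ) = ∑ j, ((k j : ℤ) : ℝ) := by
    simp [diagSum]
  rw [h2, h3]
  exact Finset.abs_sum_le_sum_abs _ _

theorem stmt_2
    {d : ℕ} (hd : 1 ≤ d) {p : ℝ} (hp : 1 ≤ p)
    (f : (Fin d → ℝ) → ℂ)
    (hper : ∀ (x : Fin d → ℝ) (j : Fin d), f (Function.update x j (x j + 2 * Real.pi)) = f x)
    (hint : IntegrableOn f (Set.Icc (0 : Fin d → ℝ) (fun _ => 2 * Real.pi)))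
    (ω : ℝ → ℝ)
    (hωc : ContinuousOn ω (Set.Icc 0 1)) (hωm : MonotoneOn ω (Set.Icc 0 1))
    (hω0 : ω 0 = 0) (hωpos : ∀ t ∈ Set.Ioc (0:ℝ) 1, 0 < ω t)
    (hE :
      ∃ C > (0:ℝ), ∃ N : ℕ, ∀ n : ℕ, N ≤ n →
      ((∑' k : Fin d → ℤ, if 1 ≤ norm1 k ∧ norm1 k ≤ n then
          ENNReal.ofReal ((((norm1 k : ℝ) / ((n : ℝ) + 1)) * ‖fCoeff f k‖) ^ p) else 0)
        + ∑' k : Fin d → ℤ, if n < norm1 k then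
          ENNReal.ofReal ((‖fCoeff f k‖) ^ p) else 0) ^ (1/p)
        ≤ ENNReal.ofReal (C * ω (1 / (n : ℝ))))
    :
    ∃ C > (0:ℝ), ∃ δ > (0:ℝ), ∀ h : ℝ, 0 < |h| → |h| < δ →
      (∑' k : Fin d → ℤ,
          ENNReal.ofReal ((‖fCoeff f k‖ * ‖1 - Complex.exp (Complex.I * (h : ℂ) * (diagSum k : ℂ))‖) ^ p)) ^ (1/p)
        ≤ ENNReal.ofReal (C * ω |h|) := by
  obtain ⟨C, hC, N, hEN⟩ := hE
  have hp0 : (0:ℝ) < p := lt_of_lt_of_le one_pos hp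
  refine ⟨8 * C, by positivity, min 1 (1 / ((N:ℝ) + 1)), by positivity, ?_⟩
  intro h h0 hδ
  have hh1 : |h| ≤ 1 := le_of_lt (lt_of_lt_of_le hδ (min_le_left _ _))
  have hhN : |h| < 1 / ((N:ℝ) + 1) := lt_of_lt_of_le hδ (min_le_right _ _)
  set t : ℝ := 1 / |h| with ht
  have ht0 : 0 ≤ t := by positivity
  have ht1 : 1 ≤ t := by rw [ht, le_div_iff₀ h0]; linarith
  set n : ℕ := Nat.ceil t with hn
  have htn : t ≤ (n : ℝ) := Nat.le_ceil t
  have hn1 : (1:ℝ) ≤ (n:ℝ) := ht1.trans htn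
  have hNn : N ≤ n := by
    have hNt : (N:ℝ) + 1 < t := by
      rw [ht, lt_div_iff₀ h0]
      have := (lt_div_iff₀ (by positivity : (0:ℝ) < (N:ℝ)+1)).mp hhN
      linarith
    have : (N:ℝ) < (n:ℝ) := by linarith
    exact_mod_cast this.le
  have hnpos : (0:ℝ) < (n:ℝ) := by linarith
  have h1n : 1 / (n:ℝ) ≤ |h| := by
    rw [div_le_iff₀ hnpos]
    have : 1 / |h| ≤ (n:ℝ) := htn
    rw [div_le_iff₀ h0] at this
    linarith
  have hceil : (n:ℝ) < t + 1 := Nat.ceil_lt_add_one ht0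
  have hh3 : |h| * ((n:ℝ) + 1) ≤ 3 := by
    have : (n:ℝ) * |h| < (t + 1) * |h| := by nlinarith
    rw [ht] at this
    have h2 : (1 / |h| + 1) * |h| = 1 + |h| := by field_simp
    nlinarith
  -- pointwise bound
  set A : (Fin d → ℤ) → ℝ := fun k => ‖fCoeff f k‖ with hA
  have key : ∀ k : Fin d → ℤ,
      ENNReal.ofReal ((A k * ‖1 - Complex.exp (Complex.I * (h : ℂ) * (diagSum k : ℂ))‖) ^ p)
        ≤ ENNReal.ofReal ((8:ℝ) ^ p) *
          ((if 1 ≤ norm1 k ∧ norm1 k ≤ n then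
              ENNReal.ofReal ((((norm1 k : ℝ) / ((n : ℝ) + 1)) * ‖fCoeff f k‖) ^ p) else 0)
           + (if n < norm1 k then ENNReal.ofReal ((‖fCoeff f k‖) ^ p) else 0)) := by
    intro k
    have hAk : 0 ≤ A k := norm_nonneg _
    have harg : Complex.I * (h : ℂ) * (diagSum k : ℂ) = Complex.I * ((h * ((diagSum k : ℤ) : ℝ) : ℝ) : ℂ) := by
      push_cast; ring
    set B : ℝ := ‖1 - Complex.exp (Complex.I * (h : ℂ) * (diagSum k : ℂ))‖ with hB
    have hBnn : 0 ≤ B := norm_nonneg _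
    rcases Nat.lt_or_ge n (norm1 k) with hcase | hcase
    · -- tail case
      have hB2 : B ≤ 2 := by rw [hB, harg]; exact B_le_two _
      have h1 : (A k * B) ^ p ≤ (8:ℝ) ^ p * (A k) ^ p := by
        calc (A k * B) ^ p ≤ (2 * A k) ^ p := by
              apply Real.rpow_le_rpow (by positivity) _ hp0.le
              calc A k * B ≤ A k * 2 := mul_le_mul_of_nonneg_left hB2 hAk
                _ = 2 * A k := by ring
          _ = (2:ℝ) ^ p * (A k) ^ p := Real.mul_rpow (by norm_num) hAk
          _ ≤ (8:ℝ) ^ p * (A k) ^ p := by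
              have h28 : (2:ℝ) ^ p ≤ (8:ℝ) ^ p := Real.rpow_le_rpow (by norm_num) (by norm_num) hp0.le
              exact mul_le_mul_of_nonneg_right h28 (Real.rpow_nonneg hAk p)
      rw [if_neg (by omega), if_pos hcase, zero_add, ← ENNReal.ofReal_mul (by positivity)]
      exact ENNReal.ofReal_le_ofReal h1
    · rcases Nat.eq_zero_or_pos (norm1 k) with h0k | h1k
      · -- k = 0
        have hzero : ∀ j, k j = 0 := by
          intro j
          have := Finset.sum_eq_zero_iff.mp h0k j (Finset.mem_univ j)
          omega
        have hds : diagSum k = 0 := by simp [diagSum, hzero]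
        have hB0 : B = 0 := by
          rw [hB, hds]
          simp
        rw [hB0, mul_zero, Real.zero_rpow hp0.ne', ENNReal.ofReal_zero]
        exact zero_le
      · -- middle case
        have hσ := abs_diagSum_le k
        have hB6 : B ≤ 6 * ((norm1 k : ℝ) / ((n:ℝ) + 1)) := by
          have hl : B ≤ 2 * |h * ((diagSum k : ℤ) : ℝ)| := by rw [hB, harg]; exact B_le_lin _
          rw [abs_mul] at hl
          have h1 : |h| * |((diagSum k : ℤ) : ℝ)| ≤ |h| * (norm1 k : ℝ) :=
            mul_le_mul_of_nonneg_left hσ (abs_nonneg h)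
          have h2 : |h| * (norm1 k : ℝ) ≤ 3 * ((norm1 k : ℝ) / ((n:ℝ) + 1)) := by
            have hnk : (0:ℝ) ≤ (norm1 k : ℝ) := Nat.cast_nonneg _
            have hinv : |h| ≤ 3 / ((n:ℝ)+1) := by
              rw [le_div_iff₀ (by positivity)]
              linarith [hh3]
            calc |h| * (norm1 k : ℝ) ≤ (3 / ((n:ℝ)+1)) * (norm1 k : ℝ) :=
                  mul_le_mul_of_nonneg_right hinv hnk
              _ = 3 * ((norm1 k : ℝ) / ((n:ℝ)+1)) := by ring
          linarith
        have hr : (0:ℝ) ≤ (norm1 k : ℝ) / ((n:ℝ) + 1) := by positivity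
        have h1 : (A k * B) ^ p ≤ (8:ℝ) ^ p * (((norm1 k : ℝ) / ((n:ℝ) + 1)) * A k) ^ p := by
          calc (A k * B) ^ p ≤ (6 * (((norm1 k : ℝ) / ((n:ℝ) + 1)) * A k)) ^ p := by
                apply Real.rpow_le_rpow (by positivity) _ hp0.le
                calc A k * B ≤ A k * (6 * ((norm1 k : ℝ) / ((n:ℝ) + 1))) :=
                      mul_le_mul_of_nonneg_left hB6 hAk
                  _ = 6 * (((norm1 k : ℝ) / ((n:ℝ) + 1)) * A k) := by ring
            _ = (6:ℝ) ^ p * (((norm1 k : ℝ) / ((n:ℝ) + 1)) * A k) ^ p :=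
                Real.mul_rpow (by norm_num) (by positivity)
            _ ≤ (8:ℝ) ^ p * (((norm1 k : ℝ) / ((n:ℝ) + 1)) * A k) ^ p := by
                have h68 : (6:ℝ) ^ p ≤ (8:ℝ) ^ p := Real.rpow_le_rpow (by norm_num) (by norm_num) hp0.le
                exact mul_le_mul_of_nonneg_right h68 (Real.rpow_nonneg (mul_nonneg hr hAk) p)
        rw [if_pos ⟨h1k, hcase⟩, if_neg (by omega), add_zero, ← ENNReal.ofReal_mul (by positivity)]
        exact ENNReal.ofReal_le_ofReal h1
  -- sum it up
  have hsum :
      (∑' k : Fin d → ℤ,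
          ENNReal.ofReal ((‖fCoeff f k‖ * ‖1 - Complex.exp (Complex.I * (h : ℂ) * (diagSum k : ℂ))‖) ^ p))
        ≤ ENNReal.ofReal ((8:ℝ) ^ p) *
          ((∑' k : Fin d → ℤ, if 1 ≤ norm1 k ∧ norm1 k ≤ n then
              ENNReal.ofReal ((((norm1 k : ℝ) / ((n : ℝ) + 1)) * ‖fCoeff f k‖) ^ p) else 0)
            + ∑' k : Fin d → ℤ, if n < norm1 k then
              ENNReal.ofReal ((‖fCoeff f k‖) ^ p) else 0) := by
    rw [← ENNReal.tsum_add, ← ENNReal.tsum_mul_left]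
    exact ENNReal.tsum_le_tsum key
  have hstep := ENNReal.rpow_le_rpow hsum (by positivity : (0:ℝ) ≤ 1/p)
  rw [ENNReal.mul_rpow_of_nonneg _ _ (by positivity : (0:ℝ) ≤ 1/p)] at hstep
  have hc : (ENNReal.ofReal ((8:ℝ) ^ p)) ^ (1/p) = ENNReal.ofReal 8 := by
    rw [← ENNReal.ofReal_rpow_of_pos (by norm_num : (0:ℝ) < 8), ← ENNReal.rpow_mul,
      mul_one_div_cancel hp0.ne', ENNReal.rpow_one]
  rw [hc] at hstep
  have hω' : ω (1/(n:ℝ)) ≤ ω |h| := by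
    apply hωm ⟨by positivity, by rw [div_le_one hnpos]; exact hn1⟩ ⟨abs_nonneg h, hh1⟩ h1n
  calc (∑' k : Fin d → ℤ,
          ENNReal.ofReal ((‖fCoeff f k‖ * ‖1 - Complex.exp (Complex.I * (h : ℂ) * (diagSum k : ℂ))‖) ^ p)) ^ (1/p)
      ≤ ENNReal.ofReal 8 * (((∑' k : Fin d → ℤ, if 1 ≤ norm1 k ∧ norm1 k ≤ n then
              ENNReal.ofReal ((((norm1 k : ℝ) / ((n : ℝ) + 1)) * ‖fCoeff f k‖) ^ p) else 0)
            + ∑' k : Fin d → ℤ, if n < norm1 k then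
              ENNReal.ofReal ((‖fCoeff f k‖) ^ p) else 0) ^ (1/p)) := hstep
    _ ≤ ENNReal.ofReal 8 * ENNReal.ofReal (C * ω (1/(n:ℝ))) :=
        mul_le_mul_right (hEN n hNn) _
    _ = ENNReal.ofReal (8 * (C * ω (1/(n:ℝ)))) := (ENNReal.ofReal_mul (by norm_num)).symm
    _ ≤ ENNReal.ofReal (8 * C * ω |h|) := by
        apply ENNReal.ofReal_le_ofReal
        have := mul_le_mul_of_nonneg_left hω' hC.le
        linarith
end

section
/- (Proposition 1, implication 3)⇒1) for f ∈ L_{1,Y}) Suppose in addition that f̂(k) = 0 for every k ∈ ℤ^d that does not lie in Y = ℤ^d_+ ∪ ℤ^d_− (that is, unless either k_j ≥ 0 for all j, or k_j < 0 for all j). If D(h) := (∑_{k∈ℤ^d} |f̂(k)|^p · |1 − e^{i h σ(k)}|^p)^{1/p}, where σ(k) = k_1 + ⋯ + k_d, satisfies D(h) = O(ω(|h|)) as h → 0, then T(n) := (∑_{1≤|k|₁≤n} |k|₁^p |f̂(k)|^p)^{1/p} satisfies T(n) = O(n·ω(1/n)) as n→∞. -/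
open scoped Real ENNReal
open MeasureTheory

lemma sin_half_key {t : ℝ} (ht : |t| ≤ 1) : |t| ≤ 4 * |Real.sin (t / 2)| := by
  have h0 : Real.sin (|t| / 2) ≤ |Real.sin (t / 2)| := by
    rcases abs_cases t with ⟨h, _⟩ | ⟨h, _⟩
    · rw [h]; exact le_abs_self _
    · rw [h, neg_div, Real.sin_neg]; exact neg_le_abs _
  have : |t| ≤ 4 * Real.sin (|t| / 2) := by
    rcases eq_or_lt_of_le (abs_nonneg t) with h | h
    · simp [← h]
    · have hx : 0 < |t| / 2 := by linarith
      have hx1 : |t| / 2 ≤ 1 := by linarith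
      have := Real.sin_gt_sub_cube hx
      have hx3 : (|t| / 2) ^ 3 ≤ |t| / 2 := by
        nlinarith [sq_nonneg (|t| / 2), mul_pos hx hx]
      linarith
  linarith

lemma abs_one_sub_exp (t : ℝ) :
    ‖1 - Complex.exp ((t : ℂ) * Complex.I)‖ = 2 * |Real.sin (t / 2)| := by
  rw [Complex.exp_mul_I]
  have h : (1 : ℂ) - (Complex.cos t + Complex.sin t * Complex.I)
      = ((1 - Real.cos t : ℝ) : ℂ) + ((-Real.sin t : ℝ) : ℂ) * Complex.I := by
    push_cast; ring
  rw [h, Complex.norm_add_mul_I, Real.abs_sin_half]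
  have hs : (1 - Real.cos t) ^ 2 + (-Real.sin t) ^ 2 = 2 ^ 2 * ((1 - Real.cos t) / 2) := by
    nlinarith [Real.sin_sq_add_cos_sq t]
  rw [hs, Real.sqrt_mul (by positivity), Real.sqrt_sq (by norm_num)]

lemma key_exp {t : ℝ} (ht : |t| ≤ 1) :
    |t| ≤ 2 * ‖1 - Complex.exp ((t : ℂ) * Complex.I)‖ := by
  rw [abs_one_sub_exp]
  have := sin_half_key ht
  linarith

lemma abs_diagSum {d : ℕ} (k : Fin d → ℤ)
    (h : (∀ j, 0 ≤ k j) ∨ (∀ j, k j < 0)) : |diagSum k| = (norm1 k : ℤ) := by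
  unfold diagSum norm1
  push_cast [Int.natCast_natAbs]
  rcases h with h | h
  · rw [abs_of_nonneg (Finset.sum_nonneg fun j _ => h j)]
    exact Finset.sum_congr rfl fun j _ => (abs_of_nonneg (h j)).symm
  · rw [abs_of_nonpos (Finset.sum_nonpos fun j _ => (h j).le), ← Finset.sum_neg_distrib]
    exact Finset.sum_congr rfl fun j _ => (abs_of_neg (h j)).symm

theorem stmt_3
    {d : ℕ} (hd : 1 ≤ d) {p : ℝ} (hp : 1 ≤ p)
    (f : (Fin d → ℝ) → ℂ)
    (hper : ∀ (x : Fin d → ℝ) (j : Fin d), f (Function.update x j (x j + 2 * Real.pi)) = f x)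
    (hint : IntegrableOn f (Set.Icc (0 : Fin d → ℝ) (fun _ => 2 * Real.pi)))
    (ω : ℝ → ℝ)
    (hωc : ContinuousOn ω (Set.Icc 0 1)) (hωm : MonotoneOn ω (Set.Icc 0 1))
    (hω0 : ω 0 = 0) (hωpos : ∀ t ∈ Set.Ioc (0:ℝ) 1, 0 < ω t)
    (hY : ∀ k : Fin d → ℤ, ¬ ((∀ j, 0 ≤ k j) ∨ (∀ j, k j < 0)) → fCoeff f k = 0)
    (hD :
      ∃ C > (0:ℝ), ∃ δ > (0:ℝ), ∀ h : ℝ, 0 < |h| → |h| < δ →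
      (∑' k : Fin d → ℤ,
          ENNReal.ofReal ((‖fCoeff f k‖ * ‖1 - Complex.exp (Complex.I * (h : ℂ) * (diagSum k : ℂ))‖) ^ p)) ^ (1/p)
        ≤ ENNReal.ofReal (C * ω |h|))
    :
    ∃ C > (0:ℝ), ∃ N : ℕ, ∀ n : ℕ, N ≤ n →
      (∑' k : Fin d → ℤ, if 1 ≤ norm1 k ∧ norm1 k ≤ n then
          ENNReal.ofReal (((norm1 k : ℝ) * ‖fCoeff f k‖) ^ p) else 0) ^ (1/p)
        ≤ ENNReal.ofReal (C * (n : ℝ) * ω (1 / (n : ℝ))) := by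
  obtain ⟨C, hC, δ, hδ, hDb⟩ := hD
  refine ⟨2 * C, by linarith, ⌈1/δ⌉₊ + 1, fun n hn => ?_⟩
  have hn1 : 1 ≤ n := le_trans (Nat.le_add_left 1 _) hn
  have hnR : (0:ℝ) < n := by exact_mod_cast hn1
  have hδn : 1/δ < (n:ℝ) := by
    calc 1/δ ≤ (⌈1/δ⌉₊ : ℝ) := Nat.le_ceil _
    _ < ((⌈1/δ⌉₊ + 1 : ℕ) : ℝ) := by push_cast; linarith
    _ ≤ n := by exact_mod_cast hn
  have hhδ : 1/(n:ℝ) < δ := by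
    rw [div_lt_iff₀ hnR] at *
    rw [div_lt_iff₀ hδ] at hδn
    nlinarith
  set h : ℝ := 1/(n:ℝ) with hh
  have hhpos : 0 < h := by positivity
  have habs : |h| = h := abs_of_pos hhpos
  have hD1 := hDb h (by rw [habs]; exact hhpos) (by rw [habs]; exact hhδ)
  rw [habs] at hD1
  have hp0 : (0:ℝ) < p := lt_of_lt_of_le one_pos hp
  have hpne : p ≠ 0 := ne_of_gt hp0
  have hstep : (∑' k : Fin d → ℤ, if 1 ≤ norm1 k ∧ norm1 k ≤ n then
          ENNReal.ofReal (((norm1 k : ℝ) * ‖fCoeff f k‖) ^ p) else 0)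
      ≤ ENNReal.ofReal ((2*(n:ℝ))^p) * ∑' k : Fin d → ℤ,
          ENNReal.ofReal ((‖fCoeff f k‖ * ‖1 - Complex.exp (Complex.I * (h : ℂ) * (diagSum k : ℂ))‖) ^ p) := by
    rw [← ENNReal.tsum_mul_left]
    refine ENNReal.tsum_le_tsum fun k => ?_
    rw [← ENNReal.ofReal_mul (by positivity)]
    split_ifs with hk
    · by_cases hkY : (∀ j, 0 ≤ k j) ∨ (∀ j, k j < 0)
      · have habsd : |(diagSum k : ℝ)| = (norm1 k : ℝ) := by
          have := abs_diagSum k hkY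
          exact_mod_cast congrArg (fun z : ℤ => (z : ℝ)) this
        set t : ℝ := h * (diagSum k : ℝ) with ht
        have htabs : |t| = (norm1 k : ℝ) / n := by
          rw [ht, abs_mul, habs, habsd, hh]
          ring
        have ht1 : |t| ≤ 1 := by
          rw [htabs, div_le_one hnR]
          exact_mod_cast hk.2
        have hkey := key_exp ht1
        have hexp : Complex.I * (h : ℂ) * (diagSum k : ℂ) = (t : ℂ) * Complex.I := by
          rw [ht]; push_cast; ring
        rw [hexp]
        apply ENNReal.ofReal_le_ofReal
        set A := ‖fCoeff f k‖ with hA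
        set E := ‖1 - Complex.exp ((t : ℂ) * Complex.I)‖ with hE
        have hA0 : 0 ≤ A := norm_nonneg _
        have hE0 : 0 ≤ E := norm_nonneg _
        have hm : (norm1 k : ℝ) ≤ 2 * n * E := by
          have h1 : (norm1 k : ℝ) = n * |t| := by
            rw [htabs]; field_simp
          rw [h1]
          calc (n : ℝ) * |t| ≤ n * (2 * E) :=
                mul_le_mul_of_nonneg_left hkey hnR.le
          _ = 2 * n * E := by ring
        have hmain : (norm1 k : ℝ) * A ≤ 2 * (n:ℝ) * (A * E) := by
          calc (norm1 k : ℝ) * A ≤ (2 * n * E) * A :=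
                mul_le_mul_of_nonneg_right hm hA0
          _ = 2 * (n:ℝ) * (A * E) := by ring
        calc ((norm1 k : ℝ) * A) ^ p ≤ (2 * (n:ℝ) * (A * E)) ^ p :=
              Real.rpow_le_rpow (by positivity) hmain hp0.le
        _ = (2 * (n:ℝ)) ^ p * (A * E) ^ p := Real.mul_rpow (by positivity) (by positivity)
      · rw [hY k hkY]
        simp [Real.zero_rpow hpne]
    · exact zero_le
  have hfinal := ENNReal.rpow_le_rpow hstep (by positivity : (0:ℝ) ≤ 1/p)
  rw [ENNReal.mul_rpow_of_nonneg _ _ (by positivity : (0:ℝ) ≤ 1/p)] at hfinal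
  have h2n : (ENNReal.ofReal ((2 * (n:ℝ)) ^ p)) ^ (1/p) = ENNReal.ofReal (2 * (n:ℝ)) := by
    rw [← ENNReal.ofReal_rpow_of_nonneg (by positivity) hp0.le, ← ENNReal.rpow_mul,
      mul_one_div_cancel hpne, ENNReal.rpow_one]
  rw [h2n] at hfinal
  refine le_trans hfinal (le_trans (mul_le_mul_right hD1 _) ?_)
  rw [← ENNReal.ofReal_mul (by positivity)]
  apply ENNReal.ofReal_le_ofReal
  apply le_of_eq
  ring
end

section
/- (Theorem 1, implication 1)⇒2)) Let r ≥ 1 be an integer. Suppose that E_A(ρ) := (∑_{k∈ℤ^d, |k|₁≥r} (∑_{j=r}^{|k|₁} C(|k|₁,j)(1−ρ)^j ρ^{|k|₁−j})^p |f̂(k)|^p)^{1/p} satisfies E_A(ρ) = O((1−ρ)^{r−1}·ω(1−ρ)) as ρ→1⁻, i.e., there exist C>0 and δ∈(0,1) such that E_A(ρ) ≤ C(1−ρ)^{r−1}ω(1−ρ) for all ρ∈(1−δ,1). Then Q_r(ρ) := (∑_{|k|₁≥r} (|k|₁!/(|k|₁−r)!)^p ρ^{p|k|₁} |f̂(k)|^p)^{1/p}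 satisfies Q_r(ρ) = O(ω(1−ρ)/(1−ρ)) as ρ→1⁻. -/
open scoped Real ENNReal
open MeasureTheory

theorem stmt_4
    {d : ℕ} (hd : 1 ≤ d) {p : ℝ} (hp : 1 ≤ p)
    (f : (Fin d → ℝ) → ℂ)
    (hper : ∀ (x : Fin d → ℝ) (j : Fin d), f (Function.update x j (x j + 2 * Real.pi)) = f x)
    (hint : IntegrableOn f (Set.Icc (0 : Fin d → ℝ) (fun _ => 2 * Real.pi)))
    (ω : ℝ → ℝ)
    (hωc : ContinuousOn ω (Set.Icc 0 1)) (hωm : MonotoneOn ω (Set.Icc 0 1))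
    (hω0 : ω 0 = 0) (hωpos : ∀ t ∈ Set.Ioc (0:ℝ) 1, 0 < ω t)
    (r : ℕ) (hr : 1 ≤ r)
    (hEA :
      ∃ C > (0:ℝ), ∃ δ : ℝ, 0 < δ ∧ δ < 1 ∧ ∀ ρ : ℝ, 1 - δ < ρ → ρ < 1 →
      (∑' k : Fin d → ℤ, if r ≤ norm1 k then
          ENNReal.ofReal (((∑ j ∈ Finset.Icc r (norm1 k),
            (Nat.choose (norm1 k) j : ℝ) * (1 - ρ) ^ j * ρ ^ (norm1 k - j)) * ‖fCoeff f k‖) ^ p)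
          else 0) ^ (1/p)
        ≤ ENNReal.ofReal (C * (1 - ρ) ^ (r - 1) * ω (1 - ρ)))
    :
    ∃ C > (0:ℝ), ∃ δ : ℝ, 0 < δ ∧ δ < 1 ∧ ∀ ρ : ℝ, 1 - δ < ρ → ρ < 1 →
      (∑' k : Fin d → ℤ, if r ≤ norm1 k then
          ENNReal.ofReal (((Nat.descFactorial (norm1 k) r : ℝ) * ρ ^ (norm1 k) * ‖fCoeff f k‖) ^ p)
          else 0) ^ (1/p)
        ≤ ENNReal.ofReal (C * (ω (1 - ρ) / (1 - ρ))) := by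
  obtain ⟨C, hC, δ, hδ0, hδ1, hE⟩ := hEA
  refine ⟨C * r.factorial, by positivity, δ, hδ0, hδ1, ?_⟩
  intro ρ hρ1 hρ2
  have hρ0 : 0 < ρ := by linarith
  have ht0 : 0 < 1 - ρ := by linarith
  have hp0 : 0 < p := by linarith
  set t : ℝ := 1 - ρ with ht
  set K : ℝ := r.factorial / t ^ r with hK
  have hK0 : 0 < K := by positivity
  have key : ∀ k : Fin d → ℤ,
      (if r ≤ norm1 k then
          ENNReal.ofReal (((Nat.descFactorial (norm1 k) r : ℝ) * ρ ^ (norm1 k) * ‖fCoeff f k‖) ^ p)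
          else 0)
      ≤ ENNReal.ofReal (K ^ p) *
        (if r ≤ norm1 k then
          ENNReal.ofReal (((∑ j ∈ Finset.Icc r (norm1 k),
            (Nat.choose (norm1 k) j : ℝ) * t ^ j * ρ ^ (norm1 k - j)) * ‖fCoeff f k‖) ^ p)
          else 0) := by
    intro k
    by_cases h : r ≤ norm1 k
    · simp only [h, if_true]
      set ν := norm1 k with hν
      set a : ℝ := ‖fCoeff f k‖ with ha
      have ha0 : 0 ≤ a := norm_nonneg _
      set S : ℝ := ∑ j ∈ Finset.Icc r ν, (Nat.choose ν j : ℝ) * t ^ j * ρ ^ (ν - j) with hS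
      have hterm : (Nat.choose ν r : ℝ) * t ^ r * ρ ^ (ν - r) ≤ S := by
        refine Finset.single_le_sum (f := fun j => (Nat.choose ν j : ℝ) * t ^ j * ρ ^ (ν - j))
          (fun j _ => by positivity) (Finset.mem_Icc.mpr ⟨le_refl r, h⟩)
      have hmain : (Nat.descFactorial ν r : ℝ) * ρ ^ ν ≤ K * S := by
        have h1 : ρ ^ ν ≤ ρ ^ (ν - r) :=
          pow_le_pow_of_le_one hρ0.le hρ2.le (Nat.sub_le ν r)
        have hD : (Nat.descFactorial ν r : ℝ) = (r.factorial : ℝ) * (Nat.choose ν r : ℝ) := by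
          rw [Nat.descFactorial_eq_factorial_mul_choose]; push_cast; ring
        have h2 : (Nat.descFactorial ν r : ℝ) * ρ ^ ν
            ≤ K * ((Nat.choose ν r : ℝ) * t ^ r * ρ ^ (ν - r)) := by
          have htr : K * ((Nat.choose ν r : ℝ) * t ^ r * ρ ^ (ν - r))
              = (r.factorial : ℝ) * (Nat.choose ν r : ℝ) * ρ ^ (ν - r) := by
            rw [hK]; field_simp
          rw [htr, hD]
          exact mul_le_mul_of_nonneg_left h1 (by positivity)
        exact h2.trans (mul_le_mul_of_nonneg_left hterm hK0.le)
      have hbase : (Nat.descFactorial ν r : ℝ) * ρ ^ ν * a ≤ K * S * a :=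
        mul_le_mul_of_nonneg_right hmain ha0
      have hlhs0 : (0:ℝ) ≤ (Nat.descFactorial ν r : ℝ) * ρ ^ ν * a := by positivity
      have hrp : ((Nat.descFactorial ν r : ℝ) * ρ ^ ν * a) ^ p ≤ (K * S * a) ^ p :=
        Real.rpow_le_rpow hlhs0 hbase hp0.le
      have hS0 : 0 ≤ S := le_trans (by positivity) hterm
      have hsplit : (K * S * a) ^ p = K ^ p * (S * a) ^ p := by
        rw [mul_assoc, Real.mul_rpow hK0.le (by positivity)]
      calc ENNReal.ofReal (((Nat.descFactorial ν r : ℝ) * ρ ^ ν * a) ^ p)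
          ≤ ENNReal.ofReal ((K * S * a) ^ p) := ENNReal.ofReal_le_ofReal hrp
        _ = ENNReal.ofReal (K ^ p) * ENNReal.ofReal ((S * a) ^ p) := by
            rw [hsplit, ENNReal.ofReal_mul (by positivity)]
    · simp [h]
  have hsum : (∑' k : Fin d → ℤ, if r ≤ norm1 k then
          ENNReal.ofReal (((Nat.descFactorial (norm1 k) r : ℝ) * ρ ^ (norm1 k) * ‖fCoeff f k‖) ^ p)
          else 0)
      ≤ ENNReal.ofReal (K ^ p) * (∑' k : Fin d → ℤ, if r ≤ norm1 k then
          ENNReal.ofReal (((∑ j ∈ Finset.Icc r (norm1 k),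
            (Nat.choose (norm1 k) j : ℝ) * t ^ j * ρ ^ (norm1 k - j)) * ‖fCoeff f k‖) ^ p)
          else 0) := by
    rw [← ENNReal.tsum_mul_left]
    exact ENNReal.tsum_le_tsum key
  have hpne : p ≠ 0 := hp0.ne'
  have hEρ := hE ρ hρ1 hρ2
  rw [← ht] at hEρ
  calc (∑' k : Fin d → ℤ, if r ≤ norm1 k then
          ENNReal.ofReal (((Nat.descFactorial (norm1 k) r : ℝ) * ρ ^ (norm1 k) * ‖fCoeff f k‖) ^ p)
          else 0) ^ (1/p)
      ≤ (ENNReal.ofReal (K ^ p) * (∑' k : Fin d → ℤ, if r ≤ norm1 k then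
          ENNReal.ofReal (((∑ j ∈ Finset.Icc r (norm1 k),
            (Nat.choose (norm1 k) j : ℝ) * t ^ j * ρ ^ (norm1 k - j)) * ‖fCoeff f k‖) ^ p)
          else 0)) ^ (1/p) := ENNReal.rpow_le_rpow hsum (by positivity)
    _ = ENNReal.ofReal K * (∑' k : Fin d → ℤ, if r ≤ norm1 k then
          ENNReal.ofReal (((∑ j ∈ Finset.Icc r (norm1 k),
            (Nat.choose (norm1 k) j : ℝ) * t ^ j * ρ ^ (norm1 k - j)) * ‖fCoeff f k‖) ^ p)
          else 0) ^ (1/p) := by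
        rw [ENNReal.mul_rpow_of_nonneg _ _ (by positivity)]
        congr 1
        rw [← ENNReal.ofReal_rpow_of_pos hK0, ← ENNReal.rpow_mul,
          mul_one_div_cancel hpne, ENNReal.rpow_one]
    _ ≤ ENNReal.ofReal K * ENNReal.ofReal (C * t ^ (r - 1) * ω t) :=
        mul_le_mul_right hEρ _
    _ = ENNReal.ofReal (C * ↑r.factorial * (ω t / t)) := by
        rw [← ENNReal.ofReal_mul hK0.le]
        congr 1
        have htr : t ^ r = t ^ (r - 1) * t := by
          rw [← pow_succ, Nat.sub_add_cancel hr]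
        rw [hK, htr]
        field_simp
end

section
/- (Theorem 1, implication 2)⇒1)) Let r ≥ 1 be an integer. Suppose that Q_r(ρ) := (∑_{k∈ℤ^d, |k|₁≥r} (|k|₁!/(|k|₁−r)!)^p ρ^{p|k|₁} |f̂(k)|^p)^{1/p} satisfies Q_r(ρ) = O(ω(1−ρ)/(1−ρ)) as ρ→1⁻. Then E_A(ρ) := (∑_{|k|₁≥r} (∑_{j=r}^{|k|₁} C(|k|₁,j)(1−ρ)^j ρ^{|k|₁−j})^p |f̂(k)|^p)^{1/p} satisfies E_A(ρ) = O((1−ρ)^{r−1}·ω(1−ρ)) as ρ→1⁻. -/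
open scoped Real ENNReal
open MeasureTheory

section AuxLemmas
open Finset
open scoped ENNReal
set_option maxHeartbeats 2000000





/-- Binomial tail bound: `∑_{j=r}^n C(n,j) t^j (1-t)^{n-j} ≤ C(n,r) t^r` for `t ∈ [0,1]`. -/
lemma binom_tail_le {r n : ℕ} (hrn : r ≤ n) {t : ℝ} (ht0 : 0 ≤ t) (ht1 : t ≤ 1) :
    ∑ j ∈ Icc r n, (n.choose j : ℝ) * t ^ j * (1 - t) ^ (n - j)
      ≤ (n.choose r : ℝ) * t ^ r := by
  have hs0 : (0:ℝ) ≤ 1 - t := by linarith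
  have key : ∀ j ∈ Icc r n, (n.choose j : ℝ) * t ^ j * (1 - t) ^ (n - j)
      ≤ (n.choose r : ℝ) * t ^ r * ((n - r).choose (j - r) * t ^ (j - r) * (1 - t) ^ ((n - r) - (j - r))) := by
    intro j hj
    rw [mem_Icc] at hj
    obtain ⟨hrj, hjn⟩ := hj
    have hc : (n.choose j : ℝ) ≤ (n.choose r : ℝ) * ((n - r).choose (j - r)) := by
      have h1 : n.choose j * j.choose r = n.choose r * (n - r).choose (j - r) :=
        Nat.choose_mul hrj
      have h2 : 1 ≤ j.choose r := Nat.one_le_iff_ne_zero.2 (Nat.choose_pos hrj).ne'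
      have : (n.choose j : ℝ) * 1 ≤ (n.choose j : ℝ) * (j.choose r : ℝ) := by
        have := Nat.choose_pos hrj
        gcongr
        · exact_mod_cast h2
      calc (n.choose j : ℝ) = n.choose j * 1 := by ring
        _ ≤ (n.choose j : ℝ) * (j.choose r : ℝ) := this
        _ = (n.choose r : ℝ) * ((n - r).choose (j - r)) := by exact_mod_cast congrArg Nat.cast h1
    have ht : t ^ j = t ^ r * t ^ (j - r) := by
      rw [← pow_add]; congr 1; omega
    have hnr : (n - r) - (j - r) = n - j := by omega
    rw [hnr, ht]
    have hb : (0:ℝ) ≤ t ^ r * t ^ (j-r) * (1-t)^(n-j) := by positivity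
    calc (n.choose j : ℝ) * (t ^ r * t ^ (j - r)) * (1 - t) ^ (n - j)
        ≤ ((n.choose r : ℝ) * ((n - r).choose (j - r))) * (t ^ r * t ^ (j - r)) * (1 - t) ^ (n - j) := by
          apply mul_le_mul_of_nonneg_right _ (by positivity)
          apply mul_le_mul_of_nonneg_right hc (by positivity)
      _ = (n.choose r : ℝ) * t ^ r * ((n - r).choose (j - r) * t ^ (j - r) * (1 - t) ^ (n - j)) := by ring
  calc ∑ j ∈ Icc r n, (n.choose j : ℝ) * t ^ j * (1 - t) ^ (n - j)
      ≤ ∑ j ∈ Icc r n, (n.choose r : ℝ) * t ^ r *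
          ((n - r).choose (j - r) * t ^ (j - r) * (1 - t) ^ ((n - r) - (j - r))) :=
        Finset.sum_le_sum key
    _ = (n.choose r : ℝ) * t ^ r * ∑ j ∈ Icc r n,
          ((n - r).choose (j - r) * t ^ (j - r) * (1 - t) ^ ((n - r) - (j - r))) := by
        rw [Finset.mul_sum]
    _ ≤ (n.choose r : ℝ) * t ^ r := by
        have hsum : ∑ j ∈ Icc r n, ((n - r).choose (j - r) * t ^ (j - r) * (1 - t) ^ ((n - r) - (j - r)) : ℝ)
            = ∑ i ∈ range (n - r + 1), ((n - r).choose i * t ^ i * (1 - t) ^ ((n - r) - i) : ℝ) := by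
          apply Finset.sum_nbij' (fun j => j - r) (fun i => i + r)
          · intro j hj; rw [mem_Icc] at hj; rw [mem_range]; omega
          · intro i hi; rw [mem_range] at hi; rw [mem_Icc]; omega
          · intro j hj; rw [mem_Icc] at hj; omega
          · intro i hi; omega
          · intro j hj; rfl
        rw [hsum]
        have hpow : ∑ i ∈ range (n - r + 1), ((n - r).choose i * t ^ i * (1 - t) ^ ((n - r) - i) : ℝ) = 1 := by
          have h := add_pow t (1 - t) (n - r)
          simp only [add_sub_cancel, one_pow] at h
          rw [show ∑ i ∈ range (n - r + 1), ((n - r).choose i * t ^ i * (1 - t) ^ ((n - r) - i) : ℝ)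
              = ∑ m ∈ range (n - r + 1), (t ^ m * (1 - t) ^ ((n - r) - m) * ((n - r).choose m) : ℝ)
            from Finset.sum_congr rfl fun i _ => by ring]
          exact h.symm
        rw [hpow, mul_one]



/-- The binomial tail sum is at most 1. -/
lemma binom_tail_le_one {r n : ℕ} {t : ℝ} (ht0 : 0 ≤ t) (ht1 : t ≤ 1) :
    ∑ j ∈ Icc r n, (n.choose j : ℝ) * t ^ j * (1 - t) ^ (n - j) ≤ 1 := by
  have hsub : Icc r n ⊆ range (n + 1) := by
    intro j hj; rw [mem_Icc] at hj; rw [mem_range]; omega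
  have h1 : ∑ j ∈ Icc r n, (n.choose j : ℝ) * t ^ j * (1 - t) ^ (n - j)
      ≤ ∑ j ∈ range (n + 1), (n.choose j : ℝ) * t ^ j * (1 - t) ^ (n - j) := by
    apply Finset.sum_le_sum_of_subset_of_nonneg hsub
    intro i _ _
    have : (0:ℝ) ≤ 1 - t := by linarith
    positivity
  have h := add_pow t (1 - t) n
  simp only [add_sub_cancel, one_pow] at h
  calc _ ≤ ∑ j ∈ range (n + 1), (n.choose j : ℝ) * t ^ j * (1 - t) ^ (n - j) := h1
    _ = 1 := by
      rw [show ∑ j ∈ range (n + 1), ((n.choose j : ℝ) * t ^ j * (1 - t) ^ (n - j))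
          = ∑ j ∈ range (n + 1), (t ^ j * (1 - t) ^ (n - j) * (n.choose j : ℝ))
        from Finset.sum_congr rfl fun i _ => by ring]
      exact h.symm

/-- `exp(-2t) ≤ 1 - t` for `t ∈ [0, 1/2]`. -/
lemma exp_neg_two_mul_le {t : ℝ} (ht0 : 0 ≤ t) (ht : t ≤ 1/2) :
    Real.exp (-(2*t)) ≤ 1 - t := by
  have h1 : (2*t) + 1 ≤ Real.exp (2*t) := Real.add_one_le_exp _
  have h2 : Real.exp (-(2*t)) = (Real.exp (2*t))⁻¹ := by
    rw [Real.exp_neg]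
  rw [h2]
  have hpos : (0:ℝ) < 2*t + 1 := by linarith
  have h3 : (Real.exp (2*t))⁻¹ ≤ (2*t + 1)⁻¹ := by
    apply inv_anti₀ hpos h1
  apply h3.trans
  rw [inv_le_iff_one_le_mul₀ (by linarith)]
  nlinarith

/-- Lower bound for `ρ^n`. -/
lemma pow_ge_exp {ρ : ℝ} {t : ℝ} (hρ : ρ = 1 - t) (ht0 : 0 ≤ t) (ht : t ≤ 1/2)
    (n : ℕ) : Real.exp (-(2*t*n)) ≤ ρ ^ n := by
  have h := exp_neg_two_mul_le ht0 ht
  calc Real.exp (-(2*t*n)) = (Real.exp (-(2*t)))^n := by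
        rw [← Real.exp_nat_mul]; ring_nf
    _ ≤ ρ ^ n := by
        apply pow_le_pow_left₀ (Real.exp_pos _).le
        rw [hρ]; exact h

/-- descFactorial lower bound. -/
lemma descFactorial_ge {n r : ℕ} (h : 2*r ≤ n) :
    ((n:ℝ)/2)^r ≤ (n.descFactorial r : ℝ) := by
  rw [Nat.descFactorial_eq_prod_range]
  push_cast
  rw [show ((n:ℝ)/2)^r = ∏ _i ∈ range r, ((n:ℝ)/2) by
    rw [Finset.prod_const, Finset.card_range]]
  apply Finset.prod_le_prod
  · intros; positivity
  · intro i hi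
    rw [mem_range] at hi
    have hin : i ≤ n := by omega
    have h2i : 2*i ≤ n := by omega
    have hc : ((n - i : ℕ):ℝ) = (n:ℝ) - i := by
      rw [Nat.cast_sub hin]
    rw [hc]
    have : (2*i:ℝ) ≤ (n:ℝ) := by exact_mod_cast h2i
    linarith

/-- ℓ^p ⊆ ℓ^1 for tsum in ℝ≥0∞. -/
lemma tsum_rpow_le {p : ℝ} (hp : 1 ≤ p) (a : ℕ → ENNReal) :
    ∑' l, a l ^ p ≤ (∑' l, a l) ^ p := by
  set S := ∑' l, a l with hS
  rcases eq_or_ne S 0 with h0 | h0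
  · have : ∀ l, a l = 0 := by
      intro l
      have := ENNReal.le_tsum (f := a) l
      rw [← hS, h0] at this
      simpa using this
    simp [this, ENNReal.zero_rpow_of_pos (by linarith : (0:ℝ) < p)]
  rcases eq_or_ne S ⊤ with htop | htop
  · rw [htop, ENNReal.top_rpow_of_pos (by linarith)]; exact le_top
  have hle : ∀ l, a l ^ p ≤ a l * S ^ (p - 1) := by
    intro l
    have hla : a l ≤ S := ENNReal.le_tsum l
    rcases eq_or_ne (a l) 0 with hz | hz
    · simp [hz, ENNReal.zero_rpow_of_pos (by linarith : (0:ℝ) < p)]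
    have hlt : a l ≠ ⊤ := fun h => htop (top_le_iff.1 (h ▸ hla))
    calc a l ^ p = a l ^ (1 + (p-1)) := by ring_nf
      _ = a l ^ (1:ℝ) * a l ^ (p-1) := ENNReal.rpow_add _ _ hz hlt
      _ ≤ a l * S ^ (p-1) := by
          rw [ENNReal.rpow_one]
          exact mul_le_mul' le_rfl (ENNReal.rpow_le_rpow hla (by linarith))
  calc ∑' l, a l ^ p ≤ ∑' l, a l * S ^ (p-1) := ENNReal.tsum_le_tsum hle
    _ = S * S ^ (p-1) := by rw [ENNReal.tsum_mul_right]
    _ = S ^ p := by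
        have h1 : (1:ℝ) + (p-1) = p := by ring
        calc S * S^(p-1) = S^(1:ℝ) * S^(p-1) := by rw [ENNReal.rpow_one]
          _ = S^((1:ℝ)+(p-1)) := (ENNReal.rpow_add _ _ h0 htop).symm
          _ = S^p := by rw [h1]



lemma omega_block {ω : ℝ → ℝ} (hωm : MonotoneOn ω (Set.Icc 0 1)) (hω0 : ω 0 = 0)
    (j : ℕ) :
    ENNReal.ofReal (ω (1 / 2^(j+1))) ≤
      2 * ∑ v ∈ Finset.Ico (2^j : ℕ) (2^(j+1) : ℕ), ENNReal.ofReal (ω (1/(v:ℝ)) / (v:ℝ)) := by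
  set θ : ℝ := 1 / 2^(j+1) with hθ
  have hθ0 : 0 < θ := by positivity
  have hθ1 : θ ≤ 1 := by
    rw [hθ]
    rw [div_le_one (by positivity)]
    exact one_le_pow₀ (by norm_num : (1:ℝ) ≤ 2)
  have hωθ : 0 ≤ ω θ := by
    rw [← hω0]
    exact hωm ⟨le_refl 0, zero_le_one⟩ ⟨hθ0.le, hθ1⟩ hθ0.le
  have hterm : ∀ v ∈ Finset.Ico (2^j : ℕ) (2^(j+1) : ℕ),
      ENNReal.ofReal (ω θ * θ) ≤ ENNReal.ofReal (ω (1/(v:ℝ)) / (v:ℝ)) := by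
    intro v hv
    rw [mem_Ico] at hv
    have hv1 : 1 ≤ v := le_trans (Nat.one_le_two_pow) hv.1
    have hv0 : (0:ℝ) < v := by exact_mod_cast hv1
    have hvle : (v:ℝ) ≤ 2^(j+1) := by
      have : v ≤ 2^(j+1) := hv.2.le
      exact_mod_cast (by push_cast; exact_mod_cast this : (v:ℝ) ≤ ((2^(j+1) : ℕ) : ℝ))
    have hθv : θ ≤ 1/(v:ℝ) := by
      rw [hθ, div_le_div_iff₀ (by positivity) hv0]
      linarith
    have hv1' : 1/(v:ℝ) ≤ 1 := by
      rw [div_le_one hv0]; exact_mod_cast hv1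
    have hω_le : ω θ ≤ ω (1/(v:ℝ)) :=
      hωm ⟨hθ0.le, hθ1⟩ ⟨by positivity, hv1'⟩ hθv
    apply ENNReal.ofReal_le_ofReal
    rw [div_eq_mul_inv, ← one_div]
    exact mul_le_mul hω_le hθv hθ0.le (le_trans hωθ hω_le)
  have hcard : (Finset.Ico (2^j : ℕ) (2^(j+1) : ℕ)).card = 2^j := by
    rw [Nat.card_Ico, pow_succ]; omega
  have hsum : (2^j : ℕ) • ENNReal.ofReal (ω θ * θ) ≤
      ∑ v ∈ Finset.Ico (2^j : ℕ) (2^(j+1) : ℕ), ENNReal.ofReal (ω (1/(v:ℝ)) / (v:ℝ)) := by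
    have h := Finset.card_nsmul_le_sum (Finset.Ico (2^j : ℕ) (2^(j+1) : ℕ))
      (fun v => ENNReal.ofReal (ω (1/(v:ℝ)) / (v:ℝ))) (ENNReal.ofReal (ω θ * θ)) hterm
    rwa [hcard] at h
  calc ENNReal.ofReal (ω (1 / 2^(j+1)))
      = 2 * ((2^j : ℕ) • ENNReal.ofReal (ω θ * θ)) := by
        rw [nsmul_eq_mul]
        rw [show ((2^j : ℕ) : ENNReal) = ENNReal.ofReal ((2^j : ℕ) : ℝ) from
          (ENNReal.ofReal_natCast _).symm]
        rw [show (2 : ENNReal) = ENNReal.ofReal 2 from (ENNReal.ofReal_ofNat 2).symm]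
        rw [← ENNReal.ofReal_mul (by positivity), ← ENNReal.ofReal_mul (by norm_num)]
        congr 1
        push_cast
        rw [hθ]
        field_simp
        ring
    _ ≤ 2 * ∑ v ∈ Finset.Ico (2^j : ℕ) (2^(j+1) : ℕ), ENNReal.ofReal (ω (1/(v:ℝ)) / (v:ℝ)) := by
        exact mul_le_mul' le_rfl hsum

lemma omega_dyadic_sum {ω : ℝ → ℝ} (hωm : MonotoneOn ω (Set.Icc 0 1)) (hω0 : ω 0 = 0)
    {C₀ : ℝ} (hC₀ : 0 < C₀) {N₀ : ℕ}
    (hBB : ∀ n : ℕ, N₀ ≤ n →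
      (∑' v : ℕ, ENNReal.ofReal (ω (1 / ((n : ℝ) + 1 + (v : ℝ))) / ((n : ℝ) + 1 + (v : ℝ))))
        ≤ ENNReal.ofReal (C₀ * ω (1 / (n : ℝ))))
    (m : ℕ) (hm : N₀ ≤ 2^(m+1) - 1) :
    ∑' l : ℕ, ENNReal.ofReal (ω (1 / 2^(m+l))) ≤
      ENNReal.ofReal ((2 + 2*C₀) * ω (1/2^m)) := by
  have hpow1 : ∀ j : ℕ, (0:ℝ) < 1/2^j := by intro j; positivity
  have hpowle1 : ∀ j : ℕ, (1/2^j : ℝ) ≤ 1 := by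
    intro j
    rw [div_le_one (by positivity)]
    exact one_le_pow₀ (by norm_num : (1:ℝ) ≤ 2)
  have hmem : ∀ j : ℕ, (1/2^j : ℝ) ∈ Set.Icc (0:ℝ) 1 := fun j => ⟨(hpow1 j).le, hpowle1 j⟩
  have hωnn : ∀ x ∈ Set.Icc (0:ℝ) 1, 0 ≤ ω x := by
    intro x hx
    rw [← hω0]
    exact hωm ⟨le_refl 0, zero_le_one⟩ hx hx.1
  have hmono : ∀ j j' : ℕ, j ≤ j' → ω (1/2^j') ≤ ω (1/2^j) := by
    intro j j' hj
    apply hωm (hmem j') (hmem j)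
    apply div_le_div_of_nonneg_left one_pos.le (by positivity)
    exact pow_le_pow_right₀ (by norm_num) hj
  set F : ℕ → ENNReal := fun l => ENNReal.ofReal (ω (1 / 2^(m+l))) with hF
  set h : ℕ → ENNReal := fun v => ENNReal.ofReal (ω (1/(v:ℝ)) / (v:ℝ)) with hh
  -- split off first two terms
  have hsplit : ∑' l, F l = F 0 + F 1 + ∑' l, F (l + 2) := by
    have := (Summable.sum_add_tsum_nat_add' (f := F) (k := 2) ENNReal.summable).symm
    rw [this, Finset.sum_range_succ, Finset.sum_range_one]
  -- the tail via blocks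
  set I : ℕ → Finset ℕ := fun l => Finset.Ico (2^(m+l+1) : ℕ) (2^(m+l+2) : ℕ) with hI
  have htail1 : ∀ l : ℕ, F (l + 2) ≤ 2 * ∑ v ∈ I l, h v := by
    intro l
    have := omega_block hωm hω0 (m + l + 1)
    simpa [hF, hI, hh, show m + l + 2 = m + l + 1 + 1 by omega, show m + (l + 2) = m + l + 1 + 1 by omega] using this
  -- sigma-type injection
  have hblock_sum : ∑' l : ℕ, ∑ v ∈ I l, h v ≤ ∑' v : ℕ, h (2^(m+1) + v) := by
    have hmemge : ∀ l v, v ∈ I l → 2^(m+1) ≤ v := by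
      intro l v hv
      rw [hI, mem_Ico] at hv
      exact le_trans (Nat.pow_le_pow_right (by norm_num) (by omega)) hv.1
    have hrw : ∑' l : ℕ, ∑ v ∈ I l, h v = ∑' x : (l : ℕ) × {v : ℕ // v ∈ I l}, h x.2 := by
      rw [ENNReal.tsum_sigma']
      congr 1
      ext l
      exact (Finset.tsum_subtype (I l) h).symm
    rw [hrw]
    have hinj : Function.Injective
        (fun x : (l : ℕ) × {v : ℕ // v ∈ I l} => (x.2 : ℕ) - 2^(m+1)) := by
      rintro ⟨l, v, hv⟩ ⟨l', v', hv'⟩ heq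
      simp only at heq
      have h1 := hmemge l v hv
      have h2 := hmemge l' v' hv'
      have hvv : v = v' := by omega
      subst hvv
      have hll : l = l' := by
        by_contra hne
        rw [hI, mem_Ico] at hv hv'
        rcases Nat.lt_or_ge l l' with hlt | hge
        · have : 2^(m+l+2) ≤ 2^(m+l'+1) := Nat.pow_le_pow_right (by norm_num) (by omega)
          omega
        · have hlt : l' < l := by omega
          have : 2^(m+l'+2) ≤ 2^(m+l+1) := Nat.pow_le_pow_right (by norm_num) (by omega)
          omega
      subst hll
      rfl
    have := ENNReal.tsum_comp_le_tsum_of_injective hinj (fun u => h (2^(m+1) + u))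
    refine le_trans (le_of_eq ?_) this
    apply tsum_congr
    rintro ⟨l, v, hv⟩
    simp only
    congr 1
    have := hmemge l v hv
    omega
  -- identify with the hypothesis sum
  have hBsum : ∑' v : ℕ, h (2^(m+1) + v) ≤ ENNReal.ofReal (C₀ * ω (1/2^m)) := by
    set n : ℕ := 2^(m+1) - 1 with hn
    have h2 : 1 ≤ 2^(m+1) := Nat.one_le_two_pow
    have hcast : (n:ℝ) = 2^(m+1) - 1 := by
      rw [hn, Nat.cast_sub h2]
      push_cast
      ring
    have heq : ∀ v : ℕ, h (2^(m+1) + v)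
        = ENNReal.ofReal (ω (1 / ((n : ℝ) + 1 + (v : ℝ))) / ((n : ℝ) + 1 + (v : ℝ))) := by
      intro v
      rw [hh]
      simp only
      congr 2 <;> · rw [hcast]; push_cast; ring
    calc ∑' v : ℕ, h (2^(m+1) + v)
        = ∑' v : ℕ, ENNReal.ofReal (ω (1 / ((n : ℝ) + 1 + (v : ℝ))) / ((n : ℝ) + 1 + (v : ℝ))) :=
          tsum_congr heq
      _ ≤ ENNReal.ofReal (C₀ * ω (1 / (n : ℝ))) := hBB n hm
      _ ≤ ENNReal.ofReal (C₀ * ω (1/2^m)) := by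
          have hp1 : (1:ℝ) ≤ 2^m := one_le_pow₀ (by norm_num)
          have hp2 : (2:ℝ)^(m+1) = 2 * 2^m := by rw [pow_succ]; ring
          have hnpos : (0:ℝ) < (n:ℝ) := by rw [hcast]; linarith
          apply ENNReal.ofReal_le_ofReal
          apply mul_le_mul_of_nonneg_left _ hC₀.le
          apply hωm _ (hmem m)
          · rw [hcast]
            rw [div_le_div_iff₀ (by linarith) (by positivity)]
            linarith
          · constructor
            · positivity
            · rw [div_le_one hnpos, hcast]
              linarith
  -- combine
  rw [hsplit]
  have hF0 : F 0 ≤ ENNReal.ofReal (ω (1/2^m)) := by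
    rw [hF]; simp
  have hF1 : F 1 ≤ ENNReal.ofReal (ω (1/2^m)) := by
    rw [hF]
    exact ENNReal.ofReal_le_ofReal (hmono m (m+1) (by omega))
  have hFtail : ∑' l, F (l + 2) ≤ 2 * ENNReal.ofReal (C₀ * ω (1/2^m)) := by
    calc ∑' l, F (l + 2) ≤ ∑' l, 2 * ∑ v ∈ I l, h v := ENNReal.tsum_le_tsum htail1
      _ = 2 * ∑' l, ∑ v ∈ I l, h v := ENNReal.tsum_mul_left
      _ ≤ 2 * ∑' v : ℕ, h (2^(m+1) + v) := mul_le_mul' le_rfl hblock_sum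
      _ ≤ 2 * ENNReal.ofReal (C₀ * ω (1/2^m)) := mul_le_mul' le_rfl hBsum
  calc F 0 + F 1 + ∑' l, F (l + 2)
      ≤ ENNReal.ofReal (ω (1/2^m)) + ENNReal.ofReal (ω (1/2^m))
        + 2 * ENNReal.ofReal (C₀ * ω (1/2^m)) := by
        gcongr
    _ = ENNReal.ofReal ((2 + 2*C₀) * ω (1/2^m)) := by
        rw [show (2:ENNReal) = ENNReal.ofReal 2 from (ENNReal.ofReal_ofNat 2).symm]
        rw [← ENNReal.ofReal_mul (by norm_num)]
        rw [← ENNReal.ofReal_add (hωnn _ (hmem m)) (hωnn _ (hmem m))]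
        rw [← ENNReal.ofReal_add (by nlinarith [hωnn _ (hmem m)]) (by nlinarith [hωnn _ (hmem m)])]
        congr 1
        ring


lemma core_est {ι : Type*} {p : ℝ} (hp : 1 ≤ p) (n : ι → ℕ) (g : ι → ℝ) (hg : ∀ k, 0 ≤ g k)
    (ω : ℝ → ℝ) (hωm : MonotoneOn ω (Set.Icc 0 1)) (hω0 : ω 0 = 0)
    {C₀ : ℝ} (hC₀ : 0 < C₀) {N₀ : ℕ} (hN₀1 : 1 ≤ N₀)
    (hBB : ∀ nn : ℕ, N₀ ≤ nn →
      (∑' v : ℕ, ENNReal.ofReal (ω (1 / ((nn : ℝ) + 1 + (v : ℝ))) / ((nn : ℝ) + 1 + (v : ℝ))))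
        ≤ ENNReal.ofReal (C₀ * ω (1 / (nn : ℝ))))
    (r : ℕ) (hr : 1 ≤ r)
    {C : ℝ} (hC : 0 < C) {δ : ℝ} (hδ0 : 0 < δ) (hδ1 : δ < 1)
    (hQb : ∀ ρ : ℝ, 1 - δ < ρ → ρ < 1 →
      (∑' k : ι, if r ≤ n k then
          ENNReal.ofReal (((Nat.descFactorial (n k) r : ℝ) * ρ ^ (n k) * g k) ^ p)
          else 0) ^ (1/p)
        ≤ ENNReal.ofReal (C * (ω (1 - ρ) / (1 - ρ)))) :
    ∃ K > (0:ℝ), ∃ δ' : ℝ, 0 < δ' ∧ δ' < 1 ∧ ∀ ρ : ℝ, 1 - δ' < ρ → ρ < 1 →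
      (∑' k : ι, if r ≤ n k then
          ENNReal.ofReal (((∑ j ∈ Finset.Icc r (n k),
            (Nat.choose (n k) j : ℝ) * (1 - ρ) ^ j * ρ ^ (n k - j)) * g k) ^ p)
          else 0) ^ (1/p)
        ≤ ENNReal.ofReal (K * (1 - ρ) ^ (r - 1) * ω (1 - ρ)) := by
  classical
  have hp0 : (0:ℝ) < p := by linarith
  have hip0 : (0:ℝ) < 1/p := by positivity
  have hip1 : 1/p ≤ 1 := by rw [div_le_one hp0]; linarith
  set E : ℝ := Real.exp 8 with hE
  have hEpos : 0 < E := Real.exp_pos _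
  have hE1 : 1 ≤ E := Real.one_le_exp (by norm_num)
  set M : ℕ := 2*r + N₀ + 2 with hM
  have hM5 : 5 ≤ M := by omega
  set K : ℝ := E*C + E*2^r*C*(2+2*C₀) with hK
  have hKpos : 0 < K := by positivity
  have hδ'0 : 0 < min δ (1/(M:ℝ)) := by
    apply lt_min hδ0
    positivity
  refine ⟨K, hKpos, min δ (1/(M:ℝ)), hδ'0, ?_, ?_⟩
  · calc min δ (1/(M:ℝ)) ≤ 1/(M:ℝ) := min_le_right _ _
      _ < 1 := by
        rw [div_lt_one (by exact_mod_cast by omega : (0:ℝ) < (M:ℝ))]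
        exact_mod_cast by omega
  intro ρ hρ1 hρ2
  set t : ℝ := 1 - ρ with htdef
  have ht0 : 0 < t := by rw [htdef]; linarith
  have h1t : 1 - t = ρ := by rw [htdef]; ring
  have hρt : ρ = 1 - t := by rw [htdef]; ring
  have htδ' : t < min δ (1/(M:ℝ)) := by rw [htdef]; linarith
  have htδ : t < δ := lt_of_lt_of_le htδ' (min_le_left _ _)
  have htM : t < 1/(M:ℝ) := lt_of_lt_of_le htδ' (min_le_right _ _)
  have hMt : (M:ℝ) * t < 1 := by
    have hM0 : (0:ℝ) < (M:ℝ) := by exact_mod_cast by omega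
    rw [lt_div_iff₀ hM0] at htM
    linarith [htM]
  have hthalf : t ≤ 1/2 := by
    have hM0 : (5:ℝ) ≤ (M:ℝ) := by exact_mod_cast hM5
    nlinarith
  have ht1 : t ≤ 1 := by linarith
  have hρ0 : 0 ≤ ρ := by rw [hρt]; linarith
  have hMinv : (M:ℝ) < 1/t := by
    have hM0 : (0:ℝ) < (M:ℝ) := by exact_mod_cast by omega
    rw [lt_div_iff₀ ht0]
    exact hMt
  -- dyadic scale m
  set m : ℕ := Nat.clog 2 ⌈1/t⌉₊ with hm
  have hceil2 : 2 ≤ ⌈1/t⌉₊ := by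
    have : (1:ℕ) < ⌈1/t⌉₊ := by
      rw [Nat.lt_ceil]
      push_cast
      have hM0 : (5:ℝ) ≤ (M:ℝ) := by exact_mod_cast hM5
      linarith
    omega
  have hm1 : 1 ≤ m := Nat.clog_pos one_lt_two hceil2
  have hm_low : (1:ℝ)/t ≤ 2^m := by
    calc (1:ℝ)/t ≤ (⌈1/t⌉₊ : ℝ) := Nat.le_ceil _
      _ ≤ ((2^m : ℕ) : ℝ) := by exact_mod_cast Nat.le_pow_clog one_lt_two _
      _ = (2:ℝ)^m := by push_cast; ring
  have h2mt : 1 ≤ 2^m * t := by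
    rw [div_le_iff₀ ht0] at hm_low
    linarith
  have hinvm_t : (1:ℝ)/2^m ≤ t := by
    rw [div_le_iff₀ (by positivity)]
    linarith
  have hm_hi : (2:ℝ)^m * t < 4 := by
    have h1 : (2:ℕ)^(m-1) < ⌈1/t⌉₊ := by
      have := Nat.pow_pred_clog_lt_self one_lt_two (by omega : 1 < ⌈1/t⌉₊)
      simpa [hm, Nat.pred_eq_sub_one] using this
    have h2 : ((2:ℕ)^(m-1) : ℝ) < 1/t + 1 :=
      lt_of_lt_of_le (by exact_mod_cast h1) (le_of_lt (Nat.ceil_lt_add_one (by positivity)))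
    have h3 : (2:ℝ)^(m-1) < 2/t := by
      have hcast : ((2:ℕ)^(m-1) : ℝ) = (2:ℝ)^(m-1) := by push_cast; ring
      rw [hcast] at h2
      have h1t' : (1:ℝ) ≤ 1/t := by
        rw [le_div_iff₀ ht0]; linarith
      have h2t : (2:ℝ)/t = 2*(1/t) := by ring
      rw [h2t]
      linarith
    have h4 : (2:ℝ)^m = 2 * 2^(m-1) := by
      rw [← pow_succ']
      congr 1
      omega
    rw [h4]
    rw [lt_div_iff₀ ht0] at h3
    nlinarith
  have hMlt : M < 2^m := by
    have h : (M:ℝ) < ((2^m : ℕ):ℝ) := by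
      have : ((2^m : ℕ):ℝ) = (2:ℝ)^m := by push_cast; ring
      rw [this]
      exact lt_of_lt_of_le hMinv hm_low
    exact_mod_cast h
  have h2rm : 2*r ≤ 2^m := by omega
  have hr2m : r ≤ 2^m := le_trans (by omega) h2rm
  have hN₀m : N₀ ≤ 2^(m+1) - 1 := by
    have : (2:ℕ)^(m+1) = 2*2^m := by rw [pow_succ]; ring
    omega
  have hωnn : ∀ x, 0 ≤ x → x ≤ 1 → 0 ≤ ω x := by
    intro x h1 h2
    rw [← hω0]
    exact hωm ⟨le_refl 0, zero_le_one⟩ ⟨h1, h2⟩ h1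
  have hωt0 : 0 ≤ ω t := hωnn t ht0.le ht1
  -- abbreviations
  set v : ι → ℝ≥0∞ := fun k => ENNReal.ofReal (((∑ j ∈ Finset.Icc r (n k),
      (Nat.choose (n k) j : ℝ) * t ^ j * ρ ^ (n k - j)) * g k) ^ p) with hv
  set q : ℝ → ι → ℝ≥0∞ := fun σ k => if r ≤ n k then
      ENNReal.ofReal (((Nat.descFactorial (n k) r : ℝ) * σ ^ (n k) * g k) ^ p) else 0 with hq
  have hA0 : ∀ k, 0 ≤ ∑ j ∈ Finset.Icc r (n k),
      (Nat.choose (n k) j : ℝ) * t ^ j * ρ ^ (n k - j) := by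
    intro k
    apply Finset.sum_nonneg
    intro j _
    positivity
  have hA1 : ∀ k, (∑ j ∈ Finset.Icc r (n k),
      (Nat.choose (n k) j : ℝ) * t ^ j * ρ ^ (n k - j)) ≤ 1 := by
    intro k
    have h := binom_tail_le_one (r := r) (n := n k) ht0.le ht1
    rw [h1t] at h
    exact h
  have hQb' : ∀ σ : ℝ, 1 - δ < σ → σ < 1 →
      (∑' k : ι, q σ k) ^ (1/p) ≤ ENNReal.ofReal (C * (ω (1 - σ) / (1 - σ))) := by
    intro σ h1 h2
    exact hQb σ h1 h2
  show (∑' k : ι, if r ≤ n k then v k else 0) ^ (1/p) ≤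
      ENNReal.ofReal (K * t ^ (r - 1) * ω t)
  -- split head and tail
  have hsplit : ∀ k, (if r ≤ n k then v k else 0)
      = (if r ≤ n k ∧ n k < 2^m then v k else 0) + (if 2^m ≤ n k then v k else 0) := by
    intro k
    by_cases h1 : r ≤ n k <;> by_cases h2 : n k < 2^m
    · have h3 : ¬ 2^m ≤ n k := by omega
      simp [h1, h2, h3]
    · have h3 : 2^m ≤ n k := by omega
      simp [h1, h2, h3]
    · have h3 : ¬ 2^m ≤ n k := fun hc => h1 (hr2m.trans hc)
      simp [h1, h2, h3]
    · have h3 : ¬ 2^m ≤ n k := fun hc => h1 (hr2m.trans hc)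
      simp [h1, h2, h3]
  rw [show (∑' k : ι, if r ≤ n k then v k else 0)
      = (∑' k : ι, if r ≤ n k ∧ n k < 2^m then v k else 0)
        + (∑' k : ι, if 2^m ≤ n k then v k else 0) from by
    rw [← ENNReal.tsum_add]; exact tsum_congr hsplit]
  refine le_trans (ENNReal.rpow_add_le_add_rpow _ _ hip0.le hip1) ?_
  have hqρ := hQb' ρ (by linarith) (by linarith)
  rw [← htdef] at hqρ
  -- HEAD
  have hhead : (∑' k : ι, if r ≤ n k ∧ n k < 2^m then v k else 0) ^ (1/p)
      ≤ ENNReal.ofReal (E*C * t^(r-1) * ω t) := by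
    have hpoint : ∀ k, (if r ≤ n k ∧ n k < 2^m then v k else 0)
        ≤ ENNReal.ofReal ((E * t^r)^p) * q ρ k := by
      intro k
      by_cases hc : r ≤ n k ∧ n k < 2^m
      · rw [if_pos hc, hq]
        simp only
        rw [if_pos hc.1, hv]
        simp only
        have hAle : (∑ j ∈ Finset.Icc r (n k), (Nat.choose (n k) j : ℝ) * t ^ j * ρ ^ (n k - j))
            ≤ E * t^r * ((Nat.descFactorial (n k) r : ℝ) * ρ ^ (n k)) := by
          have hb := binom_tail_le (r := r) (n := n k) hc.1 ht0.le ht1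
          rw [h1t] at hb
          have hcd : ((n k).choose r : ℝ) ≤ ((n k).descFactorial r : ℝ) := by
            exact_mod_cast Nat.choose_le_descFactorial _ _
          have hρn : Real.exp (-8) ≤ ρ ^ (n k) := by
            refine le_trans (Real.exp_le_exp.2 ?_) (pow_ge_exp hρt ht0.le hthalf (n k))
            have hnk : (n k : ℝ) ≤ 2^m := by
              calc (n k : ℝ) ≤ ((2^m : ℕ) : ℝ) := by exact_mod_cast hc.2.le
                _ = (2:ℝ)^m := by push_cast; ring
            nlinarith [mul_le_mul_of_nonneg_left hnk ht0.le]
          have hE' : 1 ≤ E * ρ ^ (n k) := by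
            calc (1:ℝ) = Real.exp 8 * Real.exp (-8) := by rw [← Real.exp_add]; norm_num
              _ ≤ E * ρ ^ (n k) := by
                  rw [hE]
                  exact mul_le_mul_of_nonneg_left hρn (Real.exp_pos _).le
          calc (∑ j ∈ Finset.Icc r (n k), (Nat.choose (n k) j : ℝ) * t ^ j * ρ ^ (n k - j))
              ≤ ((n k).choose r : ℝ) * t^r := hb
            _ ≤ ((n k).descFactorial r : ℝ) * t^r := by
                exact mul_le_mul_of_nonneg_right hcd (by positivity)
            _ = ((n k).descFactorial r : ℝ) * t^r * 1 := by ring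
            _ ≤ ((n k).descFactorial r : ℝ) * t^r * (E * ρ^(n k)) := by
                apply mul_le_mul_of_nonneg_left hE' (by positivity)
            _ = E * t^r * (((n k).descFactorial r : ℝ) * ρ^(n k)) := by ring
        calc ENNReal.ofReal (((∑ j ∈ Finset.Icc r (n k),
              (Nat.choose (n k) j : ℝ) * t ^ j * ρ ^ (n k - j)) * g k) ^ p)
            ≤ ENNReal.ofReal (((E * t^r) * (((n k).descFactorial r : ℝ) * ρ^(n k) * g k)) ^ p) := by
              apply ENNReal.ofReal_le_ofReal
              apply Real.rpow_le_rpow (mul_nonneg (hA0 k) (hg k)) _ hp0.le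
              calc (∑ j ∈ Finset.Icc r (n k), (Nat.choose (n k) j : ℝ) * t ^ j * ρ ^ (n k - j)) * g k
                  ≤ (E * t^r * (((n k).descFactorial r : ℝ) * ρ^(n k))) * g k :=
                    mul_le_mul_of_nonneg_right hAle (hg k)
                _ = (E * t^r) * (((n k).descFactorial r : ℝ) * ρ^(n k) * g k) := by ring
          _ = ENNReal.ofReal ((E * t^r)^p) *
              ENNReal.ofReal ((((n k).descFactorial r : ℝ) * ρ^(n k) * g k) ^ p) := by
              rw [Real.mul_rpow (by positivity)
                (mul_nonneg (mul_nonneg (by positivity) (by positivity)) (hg k))]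
              rw [ENNReal.ofReal_mul (by positivity)]
      · rw [if_neg hc]
        exact zero_le
    have hH : (∑' k : ι, if r ≤ n k ∧ n k < 2^m then v k else 0)
        ≤ ENNReal.ofReal ((E*t^r)^p) * ∑' k : ι, q ρ k := by
      rw [← ENNReal.tsum_mul_left]
      exact ENNReal.tsum_le_tsum hpoint
    have hHp := ENNReal.rpow_le_rpow hH hip0.le
    rw [ENNReal.mul_rpow_of_nonneg _ _ hip0.le] at hHp
    have hc1 : (ENNReal.ofReal ((E*t^r)^p))^(1/p) = ENNReal.ofReal (E*t^r) := by
      rw [← ENNReal.ofReal_rpow_of_nonneg (by positivity) hp0.le]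
      rw [← ENNReal.rpow_mul, mul_one_div, div_self hp0.ne', ENNReal.rpow_one]
    rw [hc1] at hHp
    refine le_trans hHp ?_
    calc ENNReal.ofReal (E*t^r) * (∑' k : ι, q ρ k) ^ (1/p)
        ≤ ENNReal.ofReal (E*t^r) * ENNReal.ofReal (C * (ω t / t)) :=
          mul_le_mul' le_rfl hqρ
      _ = ENNReal.ofReal (E*C * t^(r-1) * ω t) := by
          rw [← ENNReal.ofReal_mul (by positivity)]
          congr 1
          have htr : t^r = t^(r-1)*t := by
            rw [← pow_succ]
            congr 1
            omega
          rw [htr]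
          field_simp
  -- TAIL
  have htail : (∑' k : ι, if 2^m ≤ n k then v k else 0) ^ (1/p)
      ≤ ENNReal.ofReal ((E*2^r*C*(2+2*C₀)) * t^(r-1) * ω t) := by
    set B : ℕ → ℝ≥0∞ := fun l =>
      ENNReal.ofReal (E*2^r*C*t^(r-1)) * ENNReal.ofReal (ω (1/2^(m+l))) with hBdef
    -- pointwise: tail term is dominated by sum over dyadic blocks
    have hpt : ∀ k, (if 2^m ≤ n k then v k else 0)
        ≤ ∑' l : ℕ, (if 2^(m+l) ≤ n k ∧ n k < 2^(m+l+1) then v k else 0) := by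
      intro k
      by_cases hc : 2^m ≤ n k
      · rw [if_pos hc]
        have hnk0 : n k ≠ 0 := by
          have := Nat.one_le_two_pow (n := m)
          omega
        have hlog : m ≤ Nat.log 2 (n k) := by
          rw [Nat.le_log_iff_pow_le one_lt_two hnk0]
          exact hc
        set l := Nat.log 2 (n k) - m with hldef
        have hml : m + l = Nat.log 2 (n k) := by omega
        have h1 : 2^(m+l) ≤ n k := by
          rw [hml]
          exact Nat.pow_log_le_self 2 hnk0
        have h2 : n k < 2^(m+l+1) := by
          rw [hml]
          exact Nat.lt_pow_succ_log_self one_lt_two _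
        have hle := ENNReal.le_tsum
          (f := fun l => if 2^(m+l) ≤ n k ∧ n k < 2^(m+l+1) then v k else 0) l
        simp only [if_pos (And.intro h1 h2)] at hle
        exact hle
      · rw [if_neg hc]
        exact zero_le
    -- per-block bound
    have hTl : ∀ l : ℕ, (∑' k : ι, if 2^(m+l) ≤ n k ∧ n k < 2^(m+l+1) then v k else 0)
        ≤ B l ^ p := by
      intro l
      set θ : ℝ := 1/2^(m+l) with hθ
      have hθ0 : 0 < θ := by positivity
      have hml1 : 1 ≤ m + l := by omega
      have hpow_mono : (2:ℝ)^m ≤ 2^(m+l) := by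
        apply pow_le_pow_right₀ (by norm_num)
        omega
      have hθhalf : θ ≤ 1/2 := by
        rw [hθ]
        apply div_le_div_of_nonneg_left one_pos.le (by norm_num)
        calc (2:ℝ) = 2^1 := by norm_num
          _ ≤ 2^(m+l) := pow_le_pow_right₀ (by norm_num) hml1
      have hθt : θ ≤ t := by
        rw [hθ]
        refine le_trans ?_ hinvm_t
        apply div_le_div_of_nonneg_left one_pos.le (by positivity) hpow_mono
      have hθ1 : θ ≤ 1 := by linarith
      set σ : ℝ := 1 - θ with hσdef
      have hσθ : 1 - σ = θ := by rw [hσdef]; ring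
      have hqσ := hQb' σ (by rw [hσdef]; linarith) (by rw [hσdef]; linarith)
      rw [hσθ] at hqσ
      have hq2 : (∑' k : ι, q σ k) ≤ (ENNReal.ofReal (C * (ω θ / θ)))^p := by
        have h := ENNReal.rpow_le_rpow hqσ hp0.le
        rwa [← ENNReal.rpow_mul, one_div, inv_mul_cancel₀ hp0.ne', ENNReal.rpow_one] at h
      have hσ0 : 0 ≤ σ := by rw [hσdef]; linarith
      -- pointwise in-block bound
      have hpoint2 : ∀ k, (if 2^(m+l) ≤ n k ∧ n k < 2^(m+l+1) then v k else 0)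
          ≤ ENNReal.ofReal ((E * 2^r * θ^r)^p) * q σ k := by
        intro k
        by_cases hc : 2^(m+l) ≤ n k ∧ n k < 2^(m+l+1)
        · have h2mnk : 2^m ≤ n k := le_trans (Nat.pow_le_pow_right (by norm_num) (by omega)) hc.1
          have hrn : r ≤ n k := le_trans hr2m h2mnk
          have h2rn : 2*r ≤ n k := le_trans h2rm h2mnk
          rw [if_pos hc, hq]
          simp only
          rw [if_pos hrn, hv]
          simp only
          have hnkcast : ((2:ℝ))^(m+l) ≤ (n k : ℝ) := by
            calc ((2:ℝ))^(m+l) = (((2:ℕ)^(m+l) : ℕ) : ℝ) := by push_cast; ring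
              _ ≤ (n k : ℝ) := by exact_mod_cast hc.1
          have hnkcast2 : (n k : ℝ) ≤ (2:ℝ)^(m+l+1) := by
            calc (n k : ℝ) ≤ (((2:ℕ)^(m+l+1) : ℕ) : ℝ) := by exact_mod_cast hc.2.le
              _ = (2:ℝ)^(m+l+1) := by push_cast; ring
          -- descFactorial lower bound
          have hd1 : ((2:ℝ)^(m+l)/2)^r ≤ ((n k).descFactorial r : ℝ) := by
            refine le_trans ?_ (descFactorial_ge h2rn)
            apply pow_le_pow_left₀ (by positivity)
            linarith
          -- power lower bound
          have hσn : Real.exp (-8) ≤ σ ^ (n k) := by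
            refine le_trans (Real.exp_le_exp.2 ?_) (pow_ge_exp hσdef hθ0.le hθhalf (n k))
            have hθn : θ * (n k : ℝ) ≤ 2 := by
              have h1 : θ * (n k : ℝ) ≤ θ * (2:ℝ)^(m+l+1) :=
                mul_le_mul_of_nonneg_left hnkcast2 hθ0.le
              have h2 : θ * (2:ℝ)^(m+l+1) = 2 := by
                rw [hθ, pow_succ]
                field_simp
              linarith
            nlinarith
          -- the key constant identity
          have hkey1 : (E * 2^r * θ^r) * (((2:ℝ)^(m+l)/2)^r * Real.exp (-8)) = 1 := by
            have hx : (2:ℝ) * (1/2^(m+l)) * ((2:ℝ)^(m+l)/2) = 1 := by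
              field_simp
            calc (E * 2^r * θ^r) * (((2:ℝ)^(m+l)/2)^r * Real.exp (-8))
                = (E * Real.exp (-8)) * ((2 * (1/2^(m+l)) * ((2:ℝ)^(m+l)/2))^r) := by
                  rw [hθ, mul_pow, mul_pow]
                  ring
              _ = 1 := by
                  rw [hx, one_pow, hE, ← Real.exp_add]
                  norm_num
          have hkey : 1 ≤ (E * 2^r * θ^r) * (((n k).descFactorial r : ℝ) * σ^(n k)) := by
            calc (1:ℝ) = (E * 2^r * θ^r) * (((2:ℝ)^(m+l)/2)^r * Real.exp (-8)) := hkey1.symm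
              _ ≤ (E * 2^r * θ^r) * (((n k).descFactorial r : ℝ) * σ^(n k)) := by
                  apply mul_le_mul_of_nonneg_left _ (by positivity)
                  exact mul_le_mul hd1 hσn (Real.exp_pos _).le
                    (le_trans (by positivity) hd1)
          calc ENNReal.ofReal (((∑ j ∈ Finset.Icc r (n k),
                (Nat.choose (n k) j : ℝ) * t ^ j * ρ ^ (n k - j)) * g k) ^ p)
              ≤ ENNReal.ofReal (((E * 2^r * θ^r) * (((n k).descFactorial r : ℝ) * σ^(n k) * g k)) ^ p) := by
                apply ENNReal.ofReal_le_ofReal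
                apply Real.rpow_le_rpow (mul_nonneg (hA0 k) (hg k)) _ hp0.le
                calc (∑ j ∈ Finset.Icc r (n k), (Nat.choose (n k) j : ℝ) * t ^ j * ρ ^ (n k - j)) * g k
                    ≤ 1 * g k := mul_le_mul_of_nonneg_right (hA1 k) (hg k)
                  _ = g k := by ring
                  _ = 1 * g k := (one_mul _).symm
                  _ ≤ ((E * 2^r * θ^r) * (((n k).descFactorial r : ℝ) * σ^(n k))) * g k :=
                      mul_le_mul_of_nonneg_right hkey (hg k)
                  _ = (E * 2^r * θ^r) * (((n k).descFactorial r : ℝ) * σ^(n k) * g k) := by ring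
            _ = ENNReal.ofReal ((E * 2^r * θ^r)^p) *
                ENNReal.ofReal ((((n k).descFactorial r : ℝ) * σ^(n k) * g k) ^ p) := by
                rw [Real.mul_rpow (by positivity)
                  (mul_nonneg (mul_nonneg (by positivity) (by positivity)) (hg k))]
                rw [ENNReal.ofReal_mul (by positivity)]
        · rw [if_neg hc]
          exact zero_le
      -- sum the pointwise bound
      have hsum1 : (∑' k : ι, if 2^(m+l) ≤ n k ∧ n k < 2^(m+l+1) then v k else 0)
          ≤ ENNReal.ofReal ((E * 2^r * θ^r)^p) * ∑' k : ι, q σ k := by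
        rw [← ENNReal.tsum_mul_left]
        exact ENNReal.tsum_le_tsum hpoint2
      have hωθ0 : 0 ≤ ω θ := hωnn θ hθ0.le hθ1
      calc (∑' k : ι, if 2^(m+l) ≤ n k ∧ n k < 2^(m+l+1) then v k else 0)
          ≤ ENNReal.ofReal ((E * 2^r * θ^r)^p) * (ENNReal.ofReal (C * (ω θ / θ)))^p :=
            le_trans hsum1 (mul_le_mul' le_rfl hq2)
        _ = (ENNReal.ofReal ((E * 2^r * θ^r) * (C * (ω θ / θ))))^p := by
            rw [← ENNReal.ofReal_rpow_of_nonneg (by positivity) hp0.le,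
              ← ENNReal.mul_rpow_of_nonneg _ _ hp0.le,
              ← ENNReal.ofReal_mul (by positivity)]
        _ ≤ B l ^ p := by
            apply ENNReal.rpow_le_rpow _ hp0.le
            rw [hBdef]
            simp only
            rw [← hθ, ← ENNReal.ofReal_mul (by positivity)]
            apply ENNReal.ofReal_le_ofReal
            have hθr : θ^r = θ^(r-1)*θ := by
              rw [← pow_succ]
              congr 1
              omega
            have hlhs : (E * 2^r * θ^r) * (C * (ω θ / θ)) = (E*2^r*C*θ^(r-1)) * ω θ := by
              rw [hθr]
              field_simp
            rw [hlhs]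
            apply mul_le_mul_of_nonneg_right _ hωθ0
            have hpp : θ^(r-1) ≤ t^(r-1) := pow_le_pow_left₀ hθ0.le hθt _
            calc E*2^r*C*θ^(r-1) = (E*2^r*C) * θ^(r-1) := by ring
              _ ≤ (E*2^r*C) * t^(r-1) := mul_le_mul_of_nonneg_left hpp (by positivity)
              _ = E*2^r*C*t^(r-1) := by ring
    -- combine blocks
    have hT2 : (∑' k : ι, if 2^m ≤ n k then v k else 0) ≤ ∑' l : ℕ, B l ^ p := by
      calc (∑' k : ι, if 2^m ≤ n k then v k else 0)
          ≤ ∑' k : ι, ∑' l : ℕ, (if 2^(m+l) ≤ n k ∧ n k < 2^(m+l+1) then v k else 0) :=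
            ENNReal.tsum_le_tsum hpt
        _ = ∑' l : ℕ, ∑' k : ι, (if 2^(m+l) ≤ n k ∧ n k < 2^(m+l+1) then v k else 0) :=
            ENNReal.tsum_comm
        _ ≤ ∑' l : ℕ, B l ^ p := ENNReal.tsum_le_tsum hTl
    have hT3 : ∑' l : ℕ, B l ^ p ≤ (∑' l : ℕ, B l)^p := tsum_rpow_le hp _
    have hT4 : ∑' l : ℕ, B l ≤ ENNReal.ofReal ((E*2^r*C*(2+2*C₀)) * t^(r-1) * ω t) := by
      rw [hBdef, ENNReal.tsum_mul_left]
      calc ENNReal.ofReal (E*2^r*C*t^(r-1)) * ∑' l : ℕ, ENNReal.ofReal (ω (1/2^(m+l)))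
          ≤ ENNReal.ofReal (E*2^r*C*t^(r-1)) * ENNReal.ofReal ((2+2*C₀) * ω (1/2^m)) :=
            mul_le_mul' le_rfl (omega_dyadic_sum hωm hω0 hC₀ hBB m hN₀m)
        _ ≤ ENNReal.ofReal ((E*2^r*C*(2+2*C₀)) * t^(r-1) * ω t) := by
            rw [← ENNReal.ofReal_mul (by positivity)]
            apply ENNReal.ofReal_le_ofReal
            have hω_mono : ω (1/2^m) ≤ ω t := by
              apply hωm _ ⟨ht0.le, ht1⟩ hinvm_t
              constructor
              · positivity
              · calc (1:ℝ)/2^m ≤ t := hinvm_t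
                  _ ≤ 1 := ht1
            have h2 : (0:ℝ) ≤ 2+2*C₀ := by linarith
            have h3 : (0:ℝ) ≤ E*2^r*C := by positivity
            have h4 : (0:ℝ) ≤ t^(r-1) := by positivity
            calc (E*2^r*C*t^(r-1)) * ((2+2*C₀) * ω (1/2^m))
                = (E*2^r*C*(2+2*C₀)*t^(r-1)) * ω (1/2^m) := by ring
              _ ≤ (E*2^r*C*(2+2*C₀)*t^(r-1)) * ω t := by
                  apply mul_le_mul_of_nonneg_left hω_mono
                  have : (0:ℝ) ≤ E*2^r*C*(2+2*C₀) := mul_nonneg h3 h2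
                  exact mul_nonneg this h4
              _ = (E*2^r*C*(2+2*C₀)) * t^(r-1) * ω t := by ring
    calc (∑' k : ι, if 2^m ≤ n k then v k else 0) ^ (1/p)
        ≤ ((∑' l : ℕ, B l)^p)^(1/p) :=
          ENNReal.rpow_le_rpow (le_trans hT2 hT3) hip0.le
      _ = ∑' l : ℕ, B l := by
          rw [← ENNReal.rpow_mul, mul_one_div, div_self hp0.ne', ENNReal.rpow_one]
      _ ≤ _ := hT4
  calc (∑' k : ι, if r ≤ n k ∧ n k < 2^m then v k else 0) ^ (1/p)
        + (∑' k : ι, if 2^m ≤ n k then v k else 0) ^ (1/p)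
      ≤ ENNReal.ofReal (E*C * t^(r-1) * ω t)
        + ENNReal.ofReal ((E*2^r*C*(2+2*C₀)) * t^(r-1) * ω t) := add_le_add hhead htail
    _ = ENNReal.ofReal (K * t ^ (r - 1) * ω t) := by
        rw [← ENNReal.ofReal_add (by positivity) (by positivity)]
        congr 1
        rw [hK]
        ring


end AuxLemmas

theorem stmt_5
    {d : ℕ} (hd : 1 ≤ d) {p : ℝ} (hp : 1 ≤ p)
    (f : (Fin d → ℝ) → ℂ)
    (hper : ∀ (x : Fin d → ℝ) (j : Fin d), f (Function.update x j (x j + 2 * Real.pi)) = f x)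
    (hint : IntegrableOn f (Set.Icc (0 : Fin d → ℝ) (fun _ => 2 * Real.pi)))
    (ω : ℝ → ℝ)
    (hωc : ContinuousOn ω (Set.Icc 0 1)) (hωm : MonotoneOn ω (Set.Icc 0 1))
    (hω0 : ω 0 = 0) (hωpos : ∀ t ∈ Set.Ioc (0:ℝ) 1, 0 < ω t)
    (hB : ∃ C₀ > (0:ℝ), ∃ N₀ : ℕ, 1 ≤ N₀ ∧ ∀ n : ℕ, N₀ ≤ n →
      (∑' v : ℕ, ENNReal.ofReal (ω (1 / ((n : ℝ) + 1 + (v : ℝ))) / ((n : ℝ) + 1 + (v : ℝ))))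
        ≤ ENNReal.ofReal (C₀ * ω (1 / (n : ℝ))))
    (r : ℕ) (hr : 1 ≤ r)
    (hQ :
      ∃ C > (0:ℝ), ∃ δ : ℝ, 0 < δ ∧ δ < 1 ∧ ∀ ρ : ℝ, 1 - δ < ρ → ρ < 1 →
      (∑' k : Fin d → ℤ, if r ≤ norm1 k then
          ENNReal.ofReal (((Nat.descFactorial (norm1 k) r : ℝ) * ρ ^ (norm1 k) * ‖fCoeff f k‖) ^ p)
          else 0) ^ (1/p)
        ≤ ENNReal.ofReal (C * (ω (1 - ρ) / (1 - ρ))))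
    :
    ∃ C > (0:ℝ), ∃ δ : ℝ, 0 < δ ∧ δ < 1 ∧ ∀ ρ : ℝ, 1 - δ < ρ → ρ < 1 →
      (∑' k : Fin d → ℤ, if r ≤ norm1 k then
          ENNReal.ofReal (((∑ j ∈ Finset.Icc r (norm1 k),
            (Nat.choose (norm1 k) j : ℝ) * (1 - ρ) ^ j * ρ ^ (norm1 k - j)) * ‖fCoeff f k‖) ^ p)
          else 0) ^ (1/p)
        ≤ ENNReal.ofReal (C * (1 - ρ) ^ (r - 1) * ω (1 - ρ)) := by
  obtain ⟨C₀, hC₀, N₀, hN₀1, hBB⟩ := hB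
  obtain ⟨C, hC, δ, hδ0, hδ1, hQb⟩ := hQ
  exact core_est hp norm1 (fun k => ‖fCoeff f k‖)
    (fun k => norm_nonneg _) ω hωm hω0 hC₀ hN₀1 hBB r hr hC hδ0 hδ1 hQb
end
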